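/- arXiv:1301.2355 — 8 statements merged into one kernel-verified Lean document; each statement's English description precedes it below -/
import Mathlib

section
/- Let Z and Z' be free-abelian groups and F and F' free groups, with F and F' not infinite cyclic. Then Z × F is isomorphic to Z' × F' if and only if rk(Z) = rk(Z') and rk(F) = rk(F'). -/
universe u

open FreeGroup in
private lemma my_invRev_cons {α : Type*} (x : α × Bool) (m : List (α × Bool)) :
    invRev (x :: m) = invRev m ++ [(x.1, !x.2)] := by
  simp [invRev]

open FreeGroup in
private lemma my_reduce_cons_eq {α : Type*} [DecidableEq α] (x : α × Bool)
    (L : List (α × Bool)) (hL : reduce L = L)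
    (hhd : ∀ p ∈ L.head?, ¬(x.1 = p.1 ∧ x.2 = !p.2)) :
    reduce (x :: L) = x :: L := by
  rw [FreeGroup.reduce.cons, hL]
  cases L with
  | nil => rfl
  | cons hd tl =>
    show (if x.1 = hd.1 ∧ x.2 = !hd.2 then tl else x :: hd :: tl) = _
    rw [if_neg (hhd hd rfl)]

open FreeGroup in
/-- A central element of a free group which is not infinite cyclic is trivial. -/
private lemma my_center_triv {α : Type u} (h : IsEmpty (FreeGroup α ≃* Multiplicative ℤ))
    (w : FreeGroup α) (hw : ∀ x, w * x = x * w) : w = 1 := by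
  classical
  rcases isEmpty_or_nonempty α with hα | hα
  · rw [← FreeGroup.toWord_eq_nil_iff]
    cases hLw : w.toWord with
    | nil => rfl
    | cons p t => exact isEmptyElim p.1
  by_cases hsub : Subsingleton α
  · -- then FreeGroup α ≃* Multiplicative ℤ, contradiction
    exfalso
    inhabit α
    let f : FreeGroup α →* Multiplicative ℤ := FreeGroup.lift fun _ => Multiplicative.ofAdd 1
    let g : Multiplicative ℤ →* FreeGroup α := zpowersHom _ (FreeGroup.of (default : α))
    have h1 : g.comp f = MonoidHom.id _ := by
      apply FreeGroup.ext_hom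
      intro a
      have ha : a = default := Subsingleton.elim _ _
      simp [f, g, ha, zpowersHom_apply]
    have h2 : f.comp g = MonoidHom.id _ := by
      apply MonoidHom.ext_mint
      simp [f, g, zpowersHom_apply]
    exact h.false (f.toMulEquiv g h1 h2)
  · haveI : Nontrivial α := not_subsingleton_iff_nontrivial.mp hsub
    by_contra hw1
    have hL : w.toWord ≠ [] := fun hn => hw1 (FreeGroup.toWord_eq_nil_iff.mp hn)
    set L := w.toWord with hLdef
    obtain ⟨y, hy⟩ := exists_ne (L.head hL).1
    set e : Bool := !(L.getLast hL).2 with he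
    -- the conjugated element
    have hinv : (FreeGroup.mk [(y, e)])⁻¹ = FreeGroup.mk [(y, !e)] := by
      rw [FreeGroup.inv_mk]
      simp [invRev]
    have hz : FreeGroup.mk [(y, e)] * w * (FreeGroup.mk [(y, e)])⁻¹ = w := by
      rw [mul_assoc, hw, ← mul_assoc, mul_inv_cancel, one_mul]
    have hzmk : FreeGroup.mk [(y, e)] * w * (FreeGroup.mk [(y, e)])⁻¹ =
        FreeGroup.mk ((y, e) :: (L ++ [(y, !e)])) := by
      rw [hinv]
      conv_lhs => rw [← FreeGroup.mk_toWord (x := w)]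
      rw [FreeGroup.mul_mk, FreeGroup.mul_mk, ← hLdef]
      simp
    have hredL : reduce L = L := by rw [hLdef]; exact FreeGroup.reduce_toWord w
    -- step A : reduce (L ++ [(y,!e)]) = L ++ [(y,!e)]
    have hA : reduce (L ++ [(y, !e)]) = L ++ [(y, !e)] := by
      have hrw : L ++ [(y, !e)] = invRev ((y, e) :: invRev L) := by
        rw [my_invRev_cons, FreeGroup.invRev_invRev]
      rw [hrw, FreeGroup.reduce_invRev]
      congr 1
      apply my_reduce_cons_eq
      · rw [FreeGroup.reduce_invRev, hredL]
      · intro p hp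
        have hhead : (invRev L).head? = some ((L.getLast hL).1, !(L.getLast hL).2) := by
          rw [show invRev L = (L.map fun g => (g.1, !g.2)).reverse from rfl,
            List.head?_reverse]
          rw [List.getLast?_map]
          rw [List.getLast?_eq_getLast hL]
          rfl
        rw [hhead, Option.mem_some_iff] at hp
        subst hp
        rintro ⟨-, h2⟩
        simp [he] at h2
    -- step B
    have hB : reduce ((y, e) :: (L ++ [(y, !e)])) = (y, e) :: (L ++ [(y, !e)]) := by
      apply my_reduce_cons_eq _ _ hA
      intro p hp
      have : (L ++ [(y, !e)]).head? = some (L.head hL) := by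
        rw [List.head?_append_of_ne_nil _ hL, List.head?_eq_head]
      rw [this, Option.mem_some_iff] at hp
      subst hp
      rintro ⟨h1, -⟩
      exact hy h1
    have : L = (y, e) :: (L ++ [(y, !e)]) := by
      conv_lhs => rw [hLdef, ← hz, hzmk, FreeGroup.toWord_mk, hB]
    have hlen := congrArg List.length this
    simp at hlen
    omega

section prodsplit

variable {A B F F' : Type*} [CommGroup A] [CommGroup B] [Group F] [Group F']

private lemma my_snd_one (E : (A × F) ≃* (B × F'))
    (hF' : ∀ w : F', (∀ x, w * x = x * w) → w = 1) (z : A) : (E (z, 1)).2 = 1 := by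
  apply hF'
  intro x
  have hcent : ∀ g : B × F', E (z, 1) * g = g * E (z, 1) := by
    intro g
    have h1 : (z, (1 : F)) * E.symm g = E.symm g * (z, 1) := by
      ext
      · exact mul_comm _ _
      · simp
    calc E (z, 1) * g = E ((z, 1) * E.symm g) := by rw [map_mul, E.apply_symm_apply]
      _ = E (E.symm g * (z, 1)) := by rw [h1]
      _ = g * E (z, 1) := by rw [map_mul, E.apply_symm_apply]
  have := congrArg Prod.snd (hcent (1, x))
  simpa using this

private lemma my_fst_equiv (E : (A × F) ≃* (B × F'))
    (hF : ∀ w : F, (∀ x, w * x = x * w) → w = 1)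
    (hF' : ∀ w : F', (∀ x, w * x = x * w) → w = 1) : Nonempty (A ≃* B) := by
  have key : ∀ z : A, E (z, 1) = ((E (z, 1)).1, 1) := fun z =>
    Prod.ext rfl (my_snd_one E hF' z)
  have key' : ∀ b : B, E.symm (b, 1) = ((E.symm (b, 1)).1, 1) := fun b =>
    Prod.ext rfl (my_snd_one E.symm hF b)
  refine ⟨{ toFun := fun z => (E (z, 1)).1
            invFun := fun b => (E.symm (b, 1)).1
            left_inv := ?_, right_inv := ?_, map_mul' := ?_ }⟩
  · intro z
    have h : E.symm ((E (z, 1)).1, 1) = (z, 1) := by rw [← key z, E.symm_apply_apply]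
    show (E.symm ((E (z, 1)).1, 1)).1 = z
    rw [h]
  · intro b
    have h : E ((E.symm (b, 1)).1, 1) = (b, 1) := by rw [← key' b, E.apply_symm_apply]
    show (E ((E.symm (b, 1)).1, 1)).1 = b
    rw [h]
  · intro z z'
    have h : ((z * z' : A), (1 : F)) = (z, 1) * (z', 1) := by simp
    show (E (z * z', 1)).1 = (E (z, 1)).1 * (E (z', 1)).1
    rw [h, map_mul, Prod.fst_mul]

private lemma my_snd_equiv (E : (A × F) ≃* (B × F'))
    (hF : ∀ w : F, (∀ x, w * x = x * w) → w = 1)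
    (hF' : ∀ w : F', (∀ x, w * x = x * w) → w = 1) : Nonempty (F ≃* F') := by
  have key : ∀ z : A, E (z, 1) = ((E (z, 1)).1, 1) := fun z =>
    Prod.ext rfl (my_snd_one E hF' z)
  have key' : ∀ b : B, E.symm (b, 1) = ((E.symm (b, 1)).1, 1) := fun b =>
    Prod.ext rfl (my_snd_one E.symm hF b)
  have main : ∀ f : F, (E.symm (1, (E (1, f)).2)).2 = f := by
    intro f
    have h1 : ((1 : B), (E (1, f)).2) = ((E (1, f)).1⁻¹, 1) * E (1, f) := by
      ext <;> simp
    rw [h1, map_mul, E.symm_apply_apply, key' ((E (1, f)).1⁻¹)]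
    simp
  have main' : ∀ f' : F', (E (1, (E.symm (1, f')).2)).2 = f' := by
    intro f'
    have h1 : ((1 : A), (E.symm (1, f')).2) = ((E.symm (1, f')).1⁻¹, 1) * E.symm (1, f') := by
      ext <;> simp
    rw [h1, map_mul, E.apply_symm_apply, key ((E.symm (1, f')).1⁻¹)]
    simp
  refine ⟨{ toFun := fun f => (E (1, f)).2
            invFun := fun f' => (E.symm (1, f')).2
            left_inv := main, right_inv := main', map_mul' := ?_ }⟩
  intro f g
  have h : ((1 : A), f * g) = (1, f) * (1, g) := by simp
  show (E (1, f * g)).2 = (E (1, f)).2 * (E (1, g)).2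
  rw [h, map_mul, Prod.snd_mul]

end prodsplit

private lemma my_mk_eq_of_addEquiv {ι ι' : Type u}
    (e : FreeAbelianGroup ι ≃+ FreeAbelianGroup ι') : Cardinal.mk ι = Cardinal.mk ι' := by
  have e2 : (ι →₀ ℤ) ≃+ (ι' →₀ ℤ) :=
    ((FreeAbelianGroup.equivFinsupp ι).symm.trans e).trans (FreeAbelianGroup.equivFinsupp ι')
  have hrank := e2.toIntLinearEquiv.rank_eq
  rwa [rank_finsupp_self, rank_finsupp_self, Cardinal.lift_inj] at hrank

/-- For free-abelian groups `Z = FreeAbelianGroup ι`, `Z' = FreeAbelianGroup ι'`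
and free groups `F = FreeGroup σ`, `F' = FreeGroup σ'` which are not infinite cyclic,
`Z × F ≅ Z' × F'` iff the ranks agree. -/
theorem stmt0 (ι ι' σ σ' : Type u)
    (hF : IsEmpty (FreeGroup σ ≃* Multiplicative ℤ))
    (hF' : IsEmpty (FreeGroup σ' ≃* Multiplicative ℤ)) :
    Nonempty ((Multiplicative (FreeAbelianGroup ι) × FreeGroup σ) ≃*
        (Multiplicative (FreeAbelianGroup ι') × FreeGroup σ')) ↔
      Cardinal.mk ι = Cardinal.mk ι' ∧ Cardinal.mk σ = Cardinal.mk σ' := by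
  constructor
  · rintro ⟨E⟩
    have hcσ := my_center_triv hF
    have hcσ' := my_center_triv hF'
    constructor
    · obtain ⟨eA⟩ := my_fst_equiv E hcσ hcσ'
      exact my_mk_eq_of_addEquiv (MulEquiv.toAdditive eA)
    · obtain ⟨eF⟩ := my_snd_equiv E hcσ hcσ'
      have eAb : Abelianization (FreeGroup σ) ≃* Abelianization (FreeGroup σ') :=
        eF.abelianizationCongr
      have eFA : FreeAbelianGroup σ ≃+ FreeAbelianGroup σ' :=
        MulEquiv.toAdditive eAb
      exact my_mk_eq_of_addEquiv eFA
  · rintro ⟨h1, h2⟩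
    obtain ⟨eι⟩ := Cardinal.eq.mp h1
    obtain ⟨eσ⟩ := Cardinal.eq.mp h2
    have eZ : FreeAbelianGroup ι ≃+ FreeAbelianGroup ι' :=
      ((FreeAbelianGroup.equivFinsupp ι).trans (Finsupp.domCongr eι)).trans
        (FreeAbelianGroup.equivFinsupp ι').symm
    exact ⟨MulEquiv.prodCongr (AddEquiv.toMultiplicative eZ) (FreeGroup.freeGroupCongr eσ)⟩
end

section
/- Every subgroup of a direct product Z × F, where Z is free-abelian and F is free, is itself isomorphic to a direct product of a free-abelian group and a free group. -/
universe u

open Finsupp Submodule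
open Finsupp Submodule

theorem submodule_free_aux {ι : Type u} [LinearOrder ι] [WellFoundedLT ι]
    (N : Submodule ℤ (ι →₀ ℤ)) : ∃ α : Type u, Nonempty (N ≃ₗ[ℤ] (α →₀ ℤ)) := by
  classical
  set I : ι → Ideal ℤ := fun i =>
    Submodule.map (Finsupp.lapply i) (N ⊓ Finsupp.supported ℤ ℤ {j | j ≤ i}) with hI
  set g : ι → ℤ := fun i => Submodule.IsPrincipal.generator (I i) with hg
  have hgmem : ∀ i, g i ∈ I i := fun i => Submodule.IsPrincipal.generator_mem _
  have hch : ∀ i, ∃ y : ι →₀ ℤ, y ∈ N ∧ (↑y.support ⊆ {j | j ≤ i}) ∧ y i = g i := by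
    intro i
    obtain ⟨y, ⟨hyN, hys⟩, hyi⟩ := hgmem i
    exact ⟨y, hyN, (Finsupp.mem_supported ℤ y).mp hys, hyi⟩
  choose e heN hes heg using hch
  have hes' : ∀ i j, i < j → e i j = 0 := by
    intro i j hij
    by_contra h
    exact absurd (hes i (Finsupp.mem_support_iff.mpr h)) (by simp [not_le.mpr hij])
  set S := {i : ι // g i ≠ 0} with hS
  set v : S → (ι →₀ ℤ) := fun s => e s.1 with hv
  -- spanning
  have hspan : ∀ m : WithBot ι, ∀ x, x ∈ N → x.support.max = m →
      x ∈ Submodule.span ℤ (Set.range v) := by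
    intro m
    induction m using WellFoundedLT.induction with
    | _ m ih =>
      intro x hx hm
      rcases eq_or_ne x 0 with rfl | hx0
      · exact Submodule.zero_mem _
      · have hne : x.support.Nonempty := Finsupp.support_nonempty_iff.mpr hx0
        set i := x.support.max' hne with hi
        have hmax : x.support.max = (i : WithBot ι) := (Finset.coe_max' hne).symm
        have hsub : ↑x.support ⊆ {j | j ≤ i} := fun j hj => Finset.le_max' _ j hj
        have hxi : x i ∈ I i :=
          ⟨x, ⟨hx, (Finsupp.mem_supported ℤ x).mpr hsub⟩, rfl⟩
        have hxi0 : x i ≠ 0 := Finsupp.mem_support_iff.mp (x.support.max'_mem hne)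
        obtain ⟨c, hc⟩ := (Submodule.IsPrincipal.mem_iff_eq_smul_generator (I i)).mp hxi
        have hgi : g i ≠ 0 := fun h => hxi0 (by rw [hc]; simp [hg ▸ h, h])
        set y := x - c • e i with hy
        have hyN : y ∈ N := N.sub_mem hx (N.smul_mem _ (heN i))
        have hyj : ∀ j, i ≤ j → y j = 0 := by
          intro j hj
          rcases eq_or_lt_of_le hj with rfl | hj'
          · have h1 : x i = c * g i := by rw [hc]; simp [hg]
            simp [hy, Finsupp.sub_apply, Finsupp.smul_apply, h1, heg i, smul_eq_mul]
          · have hx0' : x j = 0 := by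
              by_contra h
              exact absurd (hsub (Finsupp.mem_support_iff.mpr h)) (by simp [not_le.mpr hj'])
            simp [hy, Finsupp.sub_apply, Finsupp.smul_apply, hx0', hes' i j hj']
        have hysup : ∀ j ∈ y.support, j < i := by
          intro j hj
          by_contra h
          exact Finsupp.mem_support_iff.mp hj (hyj j (not_lt.mp h))
        have hymax : y.support.max < (i : WithBot ι) := by
          rcases y.support.eq_empty_or_nonempty with he | hne'
          · rw [he, Finset.max_empty]; exact WithBot.bot_lt_coe i
          · rw [← Finset.coe_max' hne']
            exact_mod_cast hysup _ (y.support.max'_mem hne')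
        have hyspan : y ∈ Submodule.span ℤ (Set.range v) :=
          ih _ (hm ▸ hmax ▸ hymax) y hyN rfl
        have hxeq : x = y + c • v ⟨i, hgi⟩ := by simp [hy, hv]
        rw [hxeq]
        exact Submodule.add_mem _ hyspan
          (Submodule.smul_mem _ _ (Submodule.subset_span ⟨⟨i, hgi⟩, rfl⟩))
  -- linear independence
  have hli : LinearIndependent ℤ v := by
    rw [linearIndependent_iff]
    intro l hl
    by_contra hl0
    have hne : l.support.Nonempty := Finsupp.support_nonempty_iff.mpr hl0
    set m := l.support.max' hne with hm
    have h0 : (Finsupp.linearCombination ℤ v l) (m.1 : ι) = l m * g m.1 := by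
      rw [Finsupp.linearCombination_apply, Finsupp.sum, Finsupp.finset_sum_apply]
      rw [Finset.sum_eq_single m]
      · simp [hv, heg, smul_eq_mul]
      · intro s hs hsm
        have hlt : s.1 < m.1 := lt_of_le_of_ne
          (Finset.le_max' _ s hs) (fun hh => hsm (Subtype.ext hh))
        simp [hv, hes' s.1 m.1 hlt]
      · intro h; exact absurd (l.support.max'_mem hne) h
    rw [hl] at h0
    have : l m = 0 := by
      rcases mul_eq_zero.mp h0.symm with h | h
      · exact h
      · exact absurd h m.2
    exact Finsupp.mem_support_iff.mp (l.support.max'_mem hne) this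
  have hsp2 : N = Submodule.span ℤ (Set.range v) := by
    refine le_antisymm (fun x hx => hspan _ x hx rfl) (Submodule.span_le.mpr ?_)
    rintro _ ⟨s, rfl⟩
    exact heN s.1
  exact ⟨S, ⟨(LinearEquiv.ofEq _ _ hsp2).trans (Module.Basis.span hli).repr⟩⟩

theorem submodule_free {ι : Type u} (N : Submodule ℤ (ι →₀ ℤ)) :
    ∃ α : Type u, Nonempty (N ≃ₗ[ℤ] (α →₀ ℤ)) := by
  letI := IsWellOrder.linearOrder (WellOrderingRel (α := ι))
  haveI : WellFoundedLT ι := ⟨IsWellFounded.wf (r := WellOrderingRel)⟩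
  exact submodule_free_aux N


theorem mul_free_abelian_sub {ι K : Type u} [Group K]
    (f : K →* Multiplicative (FreeAbelianGroup ι)) (hf : Function.Injective f) :
    ∃ α : Type u, Nonempty (K ≃* Multiplicative (FreeAbelianGroup α)) := by
  classical
  let eqv : Multiplicative (FreeAbelianGroup ι) ≃* Multiplicative (ι →₀ ℤ) :=
    AddEquiv.toMultiplicative (FreeAbelianGroup.equivFinsupp ι)
  let f' : K →* Multiplicative (ι →₀ ℤ) := eqv.toMonoidHom.comp f
  have hf' : Function.Injective f' := eqv.injective.comp hf
  let N : Submodule ℤ (ι →₀ ℤ) :=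
    { carrier := {x | Multiplicative.ofAdd x ∈ f'.range}
      add_mem' := fun ha hb => f'.range.mul_mem ha hb
      zero_mem' := f'.range.one_mem
      smul_mem' := fun c x hx => by
        have := f'.range.zpow_mem hx c
        show Multiplicative.ofAdd (c • x) ∈ f'.range
        rw [ofAdd_zsmul]
        exact this }
  obtain ⟨α, ⟨le⟩⟩ := submodule_free N
  let e1 : K ≃* f'.range := MonoidHom.ofInjective hf'
  let e2 : f'.range ≃* Multiplicative ↥N :=
    { toFun := fun x => Multiplicative.ofAdd (⟨(x : Multiplicative (ι →₀ ℤ)).toAdd, x.2⟩ : ↥N)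
      invFun := fun n => ⟨Multiplicative.ofAdd ((n.toAdd : ↥N) : ι →₀ ℤ), (n.toAdd : ↥N).2⟩
      left_inv := fun _ => rfl
      right_inv := fun _ => rfl
      map_mul' := fun _ _ => rfl }
  let e3 : Multiplicative ↥N ≃* Multiplicative (FreeAbelianGroup α) :=
    AddEquiv.toMultiplicative (le.toAddEquiv.trans (FreeAbelianGroup.equivFinsupp α).symm)
  exact ⟨α, ⟨(e1.trans e2).trans e3⟩⟩

/-- Every subgroup of a direct product of a free-abelian group and a free
group is itself isomorphic to such a direct product. -/
theorem stmt2 (ι σ : Type u)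
    (H : Subgroup (Multiplicative (FreeAbelianGroup ι) × FreeGroup σ)) :
    ∃ (α β : Type u),
      Nonempty (H ≃* (Multiplicative (FreeAbelianGroup α) × FreeGroup β)) := by
  classical
  let φ : ↥H →* FreeGroup σ := (MonoidHom.snd _ _).comp H.subtype
  let B := φ.range
  let φ' : ↥H →* ↥B := φ.rangeRestrict
  -- centrality of elements with trivial second component
  have hcen : ∀ k h : ↥H, (k : Multiplicative (FreeAbelianGroup ι) × FreeGroup σ).2 = 1 → k * h = h * k := by
    intro k h hk
    apply Subtype.ext
    show (k : Multiplicative (FreeAbelianGroup ι) × FreeGroup σ) * h = (h : Multiplicative (FreeAbelianGroup ι) × FreeGroup σ) * k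
    apply Prod.ext
    · exact mul_comm _ _
    · show (k : Multiplicative (FreeAbelianGroup ι) × FreeGroup σ).2 * (h : Multiplicative (FreeAbelianGroup ι) × FreeGroup σ).2 = (h : Multiplicative (FreeAbelianGroup ι) × FreeGroup σ).2 * (k : Multiplicative (FreeAbelianGroup ι) × FreeGroup σ).2
      rw [hk, one_mul, mul_one]
  have hker : ∀ k : ↥H, φ' k = 1 → (k : Multiplicative (FreeAbelianGroup ι) × FreeGroup σ).2 = 1 := by
    intro k hk
    exact (congrArg Subtype.val hk : φ k = 1)
  -- splitting
  have hsurj : ∀ x : ↥B, ∃ h : ↥H, φ' h = x := by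
    intro x
    obtain ⟨h, hh⟩ := x.2
    exact ⟨h, Subtype.ext hh⟩
  choose sec hsec using hsurj
  let s : ↥B →* ↥H := IsFreeGroup.lift (fun x => sec (IsFreeGroup.of x))
  have hse : ∀ b : ↥B, φ' (s b) = b := by
    intro b
    have : φ'.comp s = MonoidHom.id ↥B := by
      apply IsFreeGroup.ext_hom
      intro a
      simp [s, IsFreeGroup.lift_of, hsec]
    exact DFunLike.congr_fun this b
  -- kernel
  let K := φ'.ker
  let j : ↥K →* Multiplicative (FreeAbelianGroup ι) :=
    (MonoidHom.fst _ _).comp (H.subtype.comp K.subtype)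
  have hjinj : Function.Injective j := by
    intro a b hab
    apply Subtype.ext; apply Subtype.ext
    apply Prod.ext
    · exact hab
    · rw [hker _ a.2, hker _ b.2]
  obtain ⟨α, ⟨eK⟩⟩ := mul_free_abelian_sub j hjinj
  -- H ≃* K × B
  have hmemK : ∀ h : ↥H, h * (s (φ' h))⁻¹ ∈ K := by
    intro h
    show φ' _ = 1
    rw [map_mul, map_inv, hse, mul_inv_cancel]
  let Φ : ↥H ≃* ↥K × ↥B :=
    { toFun := fun h => (⟨h * (s (φ' h))⁻¹, hmemK h⟩, φ' h)
      invFun := fun p => (p.1 : ↥H) * s p.2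
      left_inv := fun h => by simp
      right_inv := fun p => by
        have h1 : φ' ((p.1 : ↥H) * s p.2) = p.2 := by
          rw [map_mul, hse, p.1.2, one_mul]
        refine Prod.ext (Subtype.ext ?_) h1
        show (p.1 : ↥H) * s p.2 * (s (φ' ((p.1 : ↥H) * s p.2)))⁻¹ = (p.1 : ↥H)
        rw [h1, mul_inv_cancel_right]
      map_mul' := by
        intro h1 h2
        refine Prod.ext (Subtype.ext ?_) (map_mul φ' h1 h2)
        show h1 * h2 * (s (φ' (h1 * h2)))⁻¹ =
          (h1 * (s (φ' h1))⁻¹) * (h2 * (s (φ' h2))⁻¹)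
        have hk2 : φ' (h2 * (s (φ' h2))⁻¹) = 1 := hmemK h2
        have hcomm := hcen _ ((s (φ' h1))⁻¹) (hker _ hk2)
        rw [map_mul φ' h1 h2, map_mul s (φ' h1) (φ' h2), mul_inv_rev]
        conv_rhs => rw [mul_assoc, ← hcomm]
        group }
  exact ⟨α, IsFreeGroup.Generators ↥B,
    ⟨Φ.trans (MulEquiv.prodCongr eK (IsFreeGroup.toFreeGroup ↥B))⟩⟩
end

section
/- In ℤ² × F₂ = ⟨s,t | [s,t]⟩ × ⟨a,b⟩, the subgroup H' = ⟨s, t², a, tb⟩ satisfies [ℤ² × F₂ : H'] = 2, while [ℤ² : H' ∩ ℤ²] · [F₂ : H' ∩ F₂] = 4; hence the inequality [Z × F : H] ≤ [Z : H ∩ Z]·[F : H ∩ F] can be strict. -/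
namespace Stmt7

abbrev G := Multiplicative (Fin 2 → ℤ) × FreeGroup (Fin 2)

/-- `s = (1,0) ∈ ℤ²` -/
def s : G := (Multiplicative.ofAdd (Pi.single 0 1), 1)
/-- `t = (0,1) ∈ ℤ²` -/
def t : G := (Multiplicative.ofAdd (Pi.single 1 1), 1)
/-- generator `a` of `F₂` -/
def a : G := (1, FreeGroup.of 0)
/-- generator `b` of `F₂` -/
def b : G := (1, FreeGroup.of 1)


def e : FreeGroup (Fin 2) →* Multiplicative ℤ :=
  FreeGroup.lift (fun i => Multiplicative.ofAdd (if i = 0 then (0:ℤ) else 1))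

def f : Multiplicative (Fin 2 → ℤ) →* Multiplicative (ZMod 2) :=
  AddMonoidHom.toMultiplicative ((Int.castAddHom (ZMod 2)).comp (Pi.evalAddMonoidHom (fun _ => ℤ) 1))

def g : FreeGroup (Fin 2) →* Multiplicative (ZMod 2) :=
  (AddMonoidHom.toMultiplicative (Int.castAddHom (ZMod 2))).comp e

def φ : G →* Multiplicative (ZMod 2) := MonoidHom.coprod f g

lemma t_comm (w : FreeGroup (Fin 2)) (n : ℤ) :
    ((1, w) : G) * t ^ n = t ^ n * (1, w) := by
  simp [t, Prod.pow_mk, Prod.mk_mul_mk, mul_comm]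

lemma key_of (i : Fin 2) :
    ((1, FreeGroup.of i) : G) * t ^ (Multiplicative.toAdd (e (FreeGroup.of i))) ∈
      Subgroup.closure {s, t ^ 2, a, t * b} := by
  fin_cases i
  · have h : ((1, FreeGroup.of 0) : G) * t ^ (Multiplicative.toAdd (e (FreeGroup.of 0))) = a := by
      simp [e, a]
    exact h ▸ Subgroup.subset_closure (by simp)
  · have h : ((1, FreeGroup.of 1) : G) * t ^ (Multiplicative.toAdd (e (FreeGroup.of 1))) = t * b := by
      simp [e, t, b, Prod.mk_mul_mk, mul_comm]
    exact h ▸ Subgroup.subset_closure (by simp)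

lemma key (w : FreeGroup (Fin 2)) :
    ((1, w) : G) * t ^ (Multiplicative.toAdd (e w)) ∈
      Subgroup.closure {s, t ^ 2, a, t * b} := by
  induction w using FreeGroup.induction_on with
  | C1 => simp [e]; exact one_mem _
  | of i => exact key_of i
  | inv_of i h =>
    have heq : ((1, (FreeGroup.of i)⁻¹) : G) * t ^ (Multiplicative.toAdd (e (FreeGroup.of i)⁻¹)) =
        (((1, FreeGroup.of i) : G) * t ^ (Multiplicative.toAdd (e (FreeGroup.of i))))⁻¹ := by
      rw [mul_inv_rev, t_comm]
      simp [zpow_neg]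
    exact heq ▸ inv_mem (key_of i)
  | mul x y hx hy =>
    have heq : ((1, x * y) : G) * t ^ (Multiplicative.toAdd (e (x * y))) =
        (((1, x) : G) * t ^ (Multiplicative.toAdd (e x))) *
        (((1, y) : G) * t ^ (Multiplicative.toAdd (e y))) := by
      rw [mul_assoc, ← mul_assoc (t ^ _), ← t_comm, mul_assoc, ← zpow_add, ← mul_assoc]
      simp [Prod.mk_mul_mk]
    exact heq ▸ mul_mem hx hy

lemma zmod2_cases (y : ZMod 2) : y = 0 ∨ y = 1 := by revert y; decide

lemma decomp (m : Multiplicative (Fin 2 → ℤ)) (w : FreeGroup (Fin 2)) :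
    s ^ (Multiplicative.toAdd m 0) * t ^ (Multiplicative.toAdd m 1) * ((1, w) : G) = (m, w) := by
  have hm : m = Multiplicative.ofAdd (Pi.single 0 (1:ℤ)) ^ (Multiplicative.toAdd m 0) *
        Multiplicative.ofAdd (Pi.single 1 (1:ℤ)) ^ (Multiplicative.toAdd m 1) := by
    rw [← ofAdd_zsmul, ← ofAdd_zsmul, ← ofAdd_add]
    apply Multiplicative.toAdd.injective
    rw [toAdd_ofAdd]
    funext i
    fin_cases i <;> simp [Pi.single_apply]
  conv_rhs => rw [hm]
  simp [s, t, Prod.pow_mk, Prod.mk_mul_mk]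

lemma ker_eq : φ.ker = Subgroup.closure {s, t ^ 2, a, t * b} := by
  apply le_antisymm
  · intro x hx
    obtain ⟨m, w⟩ := x
    rw [MonoidHom.mem_ker] at hx
    have hφ : ((Multiplicative.toAdd m 1 : ℤ) : ZMod 2) +
        ((Multiplicative.toAdd (e w) : ℤ) : ZMod 2) = 0 := by
      have h2 := congrArg Multiplicative.toAdd hx
      simpa [φ, f, g, MonoidHom.coprod] using h2
    set n : ℤ := Multiplicative.toAdd (e w) with hn
    have h2 : (2 : ℤ) ∣ (Multiplicative.toAdd m 1 - n) := by
      have hz : ((Multiplicative.toAdd m 1 - n : ℤ) : ZMod 2) = 0 := by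
        push_cast
        rw [sub_eq_add_neg]
        have hneg : ((n : ZMod 2)) = -(n : ZMod 2) := by
          have h22 : (2 : ZMod 2) = 0 := by decide
          linear_combination (n : ZMod 2) * h22
        rw [← hneg]
        exact hφ
      exact (ZMod.intCast_zmod_eq_zero_iff_dvd _ 2).mp hz
    obtain ⟨k, hk⟩ := h2
    have ht : (t ^ 2) ^ k * t ^ n = t ^ (Multiplicative.toAdd m 1) := by
      rw [← zpow_natCast t 2, ← zpow_mul, ← zpow_add]
      congr 1
      omega
    have hx' : ((m, w) : G) =
        s ^ (Multiplicative.toAdd m 0) * (t ^ 2) ^ k * (((1, w) : G) * t ^ n) := by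
      rw [t_comm, mul_assoc, ← mul_assoc ((t^2)^k), ht, ← mul_assoc]
      exact (decomp m w).symm
    rw [hx']
    exact mul_mem (mul_mem (zpow_mem (Subgroup.subset_closure (by simp)) _)
      (zpow_mem (Subgroup.subset_closure (by simp)) _)) (key w)
  · rw [Subgroup.closure_le]
    intro x hx
    simp only [Set.mem_insert_iff, Set.mem_singleton_iff] at hx
    rcases hx with rfl | rfl | rfl | rfl <;>
      simp [MonoidHom.mem_ker, φ, f, g, s, t, a, b, e, MonoidHom.coprod, Prod.pow_mk,
        Prod.mk_mul_mk, ← ofAdd_add, Pi.single] <;> decide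

lemma card2 : Nat.card (Multiplicative (ZMod 2)) = 2 := by simp [Nat.card_eq_fintype_card]

lemma card_top : Nat.card (⊤ : Subgroup (Multiplicative (ZMod 2))) = 2 :=
  (Nat.card_congr Subgroup.topEquiv.toEquiv).trans card2

lemma phi_t : φ t = Multiplicative.ofAdd (1 : ZMod 2) := by
  simp [φ, f, g, t, e, MonoidHom.coprod, Pi.single]

/-- In `ℤ² × F₂`, the subgroup `H' = ⟨s, t², a, tb⟩` has index `2`, while
`[ℤ² : H' ∩ ℤ²] · [F₂ : H' ∩ F₂] = 4`; hence the inequality of Statement 6 can be strict. -/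
theorem stmt7 :
    (Subgroup.closure {s, t ^ 2, a, t * b} : Subgroup G).index = 2 ∧
      ((Subgroup.closure {s, t ^ 2, a, t * b} : Subgroup G).comap
            (MonoidHom.inl (Multiplicative (Fin 2 → ℤ)) (FreeGroup (Fin 2)))).index *
          ((Subgroup.closure {s, t ^ 2, a, t * b} : Subgroup G).comap
            (MonoidHom.inr (Multiplicative (Fin 2 → ℤ)) (FreeGroup (Fin 2)))).index = 4 := by
  rw [← ker_eq]
  have phi_surj : Function.Surjective φ := by
    intro y
    rcases zmod2_cases (Multiplicative.toAdd y) with h | h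
    · exact ⟨1, by rw [map_one]; exact Multiplicative.toAdd.injective (by simp [h])⟩
    · exact ⟨t, by rw [phi_t]; exact Multiplicative.toAdd.injective (by simpa using h.symm)⟩
  constructor
  · rw [Subgroup.index_ker, MonoidHom.range_eq_top.mpr phi_surj]
    exact card_top
  · have hl : Function.Surjective (φ.comp (MonoidHom.inl (Multiplicative (Fin 2 → ℤ)) (FreeGroup (Fin 2)))) := by
      intro y
      rcases zmod2_cases (Multiplicative.toAdd y) with h | h
      · exact ⟨1, by rw [map_one]; exact Multiplicative.toAdd.injective (by simp [h])⟩
      · refine ⟨Multiplicative.ofAdd (Pi.single 1 1), ?_⟩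
        have h1 : φ.comp (MonoidHom.inl _ _) (Multiplicative.ofAdd (Pi.single 1 1)) = φ t := rfl
        rw [h1, phi_t]
        exact Multiplicative.toAdd.injective (by simpa using h.symm)
    have hr : Function.Surjective (φ.comp (MonoidHom.inr (Multiplicative (Fin 2 → ℤ)) (FreeGroup (Fin 2)))) := by
      intro y
      rcases zmod2_cases (Multiplicative.toAdd y) with h | h
      · exact ⟨1, by rw [map_one]; exact Multiplicative.toAdd.injective (by simp [h])⟩
      · refine ⟨FreeGroup.of 1, ?_⟩
        have h1 : φ.comp (MonoidHom.inr _ _) (FreeGroup.of 1) = Multiplicative.ofAdd (1 : ZMod 2) := by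
          simp [φ, f, g, e, MonoidHom.coprod]
        rw [h1]
        exact Multiplicative.toAdd.injective (by simpa using h.symm)
    rw [MonoidHom.comap_ker, MonoidHom.comap_ker, Subgroup.index_ker, Subgroup.index_ker,
      MonoidHom.range_eq_top.mpr hl, MonoidHom.range_eq_top.mpr hr, card_top]

end Stmt7
end

section
/- For m ≥ 1 and n ≥ 2, the group ℤ^m × F_n does not satisfy the Howson property. -/
open Finsupp SemidirectProduct Subgroup

/-- The shift action of `ℤ` on `ℤ →₀ ℤ` (multiplicativized). -/
noncomputable def shiftAct : Multiplicative ℤ →* MulAut (Multiplicative (ℤ →₀ ℤ)) :=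
  MonoidHom.mk'
    (fun k => AddEquiv.toMultiplicative (Finsupp.domCongr (Equiv.addLeft k.toAdd)))
    (by
      intro k l
      ext f : 1
      refine Multiplicative.toAdd.injective ?_
      show Finsupp.equivMapDomain (Equiv.addLeft (Multiplicative.toAdd (k * l)))
          (Multiplicative.toAdd f)
        = Finsupp.equivMapDomain (Equiv.addLeft (Multiplicative.toAdd k))
            (Finsupp.equivMapDomain (Equiv.addLeft (Multiplicative.toAdd l))
              (Multiplicative.toAdd f))
      ext s
      simp only [Finsupp.equivMapDomain_apply, Equiv.addLeft_symm, Equiv.coe_addLeft,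
        toAdd_mul]
      congr 1
      ring)

/-- A wreath-like group `ℤ ≀ ℤ` as a semidirect product. -/
noncomputable abbrev WG := (Multiplicative (ℤ →₀ ℤ)) ⋊[shiftAct] (Multiplicative ℤ)

theorem shiftAct_apply (k : ℤ) (i : ℤ) (v : ℤ) :
    shiftAct (Multiplicative.ofAdd k) (Multiplicative.ofAdd (Finsupp.single i v)) =
      Multiplicative.ofAdd (Finsupp.single (k + i) v) := by
  have h : Finsupp.equivMapDomain (Equiv.addLeft k) (Finsupp.single i v)
      = Finsupp.single (k + i) v := by
    rw [Finsupp.equivMapDomain_single, Equiv.coe_addLeft]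
  exact congrArg Multiplicative.ofAdd h

/-- The map from the free group to the wreath product: the generator `0` goes to the
shift, the generator `1` goes to `δ₀`, others go to `1`. -/
noncomputable def psiF (n : ℕ) : FreeGroup (Fin n) →* WG :=
  FreeGroup.lift fun i => if i.val = 0 then inr (Multiplicative.ofAdd 1)
    else if i.val = 1 then inl (Multiplicative.ofAdd (Finsupp.single 0 1)) else 1

/-- For `m ≥ 1` and `n ≥ 2`, the group `ℤ^m × F_n` does not satisfy the
Howson property: there are finitely generated subgroups with non-finitely generated
intersection. -/
theorem stmt9 (m n : ℕ) (hm : 1 ≤ m) (hn : 2 ≤ n) :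
    ∃ H H' : Subgroup (Multiplicative (Fin m → ℤ) × FreeGroup (Fin n)),
      H.FG ∧ H'.FG ∧ ¬ (H ⊓ H').FG := by
  classical
  set G := Multiplicative (Fin m → ℤ) × FreeGroup (Fin n) with hG
  have hm0 : 0 < m := hm
  have h0 : 0 < n := by omega
  have h1 : 1 < n := hn
  set i0 : Fin n := ⟨0, h0⟩ with hi0
  set i1 : Fin n := ⟨1, h1⟩ with hi1
  set a : FreeGroup (Fin n) := FreeGroup.of i0 with ha
  set b : FreeGroup (Fin n) := FreeGroup.of i1 with hb
  set x : Multiplicative (Fin m → ℤ) := Multiplicative.ofAdd 1 with hx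
  set H : Subgroup G := Subgroup.closure {(1, a), (1, b)} with hH
  set H' : Subgroup G := Subgroup.closure {(x, a), (1, b)} with hH'
  refine ⟨H, H', ⟨{(1, a), (1, b)}, by simp [hH]⟩, ⟨{(x, a), (1, b)}, by simp [hH']⟩, ?_⟩
  intro hFG
  -- the composite homomorphism to the wreath product
  set θ : G →* WG := (psiF n).comp (MonoidHom.snd _ _) with hθ
  -- computations of ψ on generators
  have hpsia : psiF n a = inr (Multiplicative.ofAdd 1) := by
    simp [psiF, ha, hi0]
  have hpsib : psiF n b = inl (Multiplicative.ofAdd (Finsupp.single 0 1)) := by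
    simp [psiF, hb, hi1]
  -- the image of the intersection is finitely generated
  have hmapFG : (Subgroup.map θ (H ⊓ H')).FG := by
    obtain ⟨S, hS⟩ := hFG
    exact ⟨S.image θ, by rw [Finset.coe_image, ← MonoidHom.map_closure, hS]⟩
  -- every element of H has trivial first component
  have hfst : ∀ g ∈ H, g.1 = 1 := by
    intro g hg
    have : H ≤ (MonoidHom.fst (Multiplicative (Fin m → ℤ)) (FreeGroup (Fin n))).eqLocus 1 := by
      rw [hH]
      refine (Subgroup.closure_le _).mpr ?_
      rintro p (rfl | rfl) <;> rfl
    exact this hg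
  -- the evaluation homomorphism at coordinate 0 of the first factor
  set j0 : Fin m := ⟨0, hm0⟩ with hj0
  set χ : G →* Multiplicative ℤ :=
    (AddMonoidHom.toMultiplicative (Pi.evalAddMonoidHom (fun _ : Fin m => ℤ) j0)).comp
      (MonoidHom.fst _ _) with hχ
  set σ : G →* Multiplicative ℤ := rightHom.comp θ with hσ
  have hσχ : ∀ g ∈ H', σ g = χ g := by
    intro g hg
    have : H' ≤ σ.eqLocus χ := by
      rw [hH']
      refine (Subgroup.closure_le _).mpr ?_
      rintro p (rfl | rfl)
      · show σ (x, a) = χ (x, a)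
        have h1 : σ (x, a) = Multiplicative.ofAdd 1 := by
          show rightHom (psiF n a) = _
          rw [hpsia, rightHom_inr]
        have h2 : χ (x, a) = Multiplicative.ofAdd 1 := rfl
        rw [h1, h2]
      · show σ (1, b) = χ (1, b)
        have h1 : σ (1, b) = 1 := by
          show rightHom (psiF n b) = _
          rw [hpsib, rightHom_inl]
        have h2 : χ ((1 : Multiplicative (Fin m → ℤ)), b) = 1 := rfl
        rw [h1, h2]
    exact this hg
  -- elements of the intersection land in the base of the semidirect product
  have hright : ∀ g ∈ H ⊓ H', (θ g).right = 1 := by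
    intro g hg
    have h1 : σ g = χ g := hσχ g hg.2
    have h2 : g.1 = 1 := hfst g hg.1
    have h3 : χ g = 1 := by
      show (AddMonoidHom.toMultiplicative (Pi.evalAddMonoidHom (fun _ : Fin m => ℤ) j0)) g.1 = 1
      rw [h2, map_one]
    show rightHom (θ g) = 1
    rw [show rightHom (θ g) = σ g from rfl, h1, h3]
  -- all the delta functions lie in the image of the intersection
  have hmem : ∀ i : ℤ, inl (Multiplicative.ofAdd (Finsupp.single i 1)) ∈
      Subgroup.map θ (H ⊓ H') := by
    intro i
    refine ⟨((1 : Multiplicative (Fin m → ℤ)), a ^ i * b * (a ^ i)⁻¹), ⟨?_, ?_⟩, ?_⟩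
    · have he : ((1 : Multiplicative (Fin m → ℤ)), a ^ i * b * (a ^ i)⁻¹)
          = (((1 : Multiplicative (Fin m → ℤ)), a) : G) ^ i * (1, b)
            * ((((1 : Multiplicative (Fin m → ℤ)), a) : G) ^ i)⁻¹ := by
        ext <;> simp
      rw [hH, he]
      refine Subgroup.mul_mem _ (Subgroup.mul_mem _ (Subgroup.zpow_mem _ ?_ i) ?_)
        (Subgroup.inv_mem _ (Subgroup.zpow_mem _ ?_ i)) <;>
        exact Subgroup.subset_closure (by simp)
    · have he : ((1 : Multiplicative (Fin m → ℤ)), a ^ i * b * (a ^ i)⁻¹)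
          = ((x, a) : G) ^ i * (1, b) * (((x, a) : G) ^ i)⁻¹ := by
        ext <;> simp
      rw [hH', he]
      refine Subgroup.mul_mem _ (Subgroup.mul_mem _ (Subgroup.zpow_mem _ ?_ i) ?_)
        (Subgroup.inv_mem _ (Subgroup.zpow_mem _ ?_ i)) <;>
        exact Subgroup.subset_closure (by simp)
    · show psiF n (a ^ i * b * (a ^ i)⁻¹) = _
      rw [map_mul, map_mul, map_inv, map_zpow, hpsia, hpsib, ← map_zpow]
      have hz : (Multiplicative.ofAdd (1 : ℤ)) ^ i = Multiplicative.ofAdd i := by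
        rw [← ofAdd_zsmul, smul_eq_mul, mul_one]
      rw [hz, ← map_inv inr, ← inl_aut, shiftAct_apply, add_zero]
  -- now derive a contradiction
  obtain ⟨S, hS⟩ := hmapFG
  set B : Finset ℤ := S.sup (fun w => (Multiplicative.toAdd w.left).support) with hB
  obtain ⟨j, hj⟩ := Infinite.exists_notMem_finset B
  set L : Subgroup WG :=
    { carrier := {w : WG | w.right = 1 ∧ (Multiplicative.toAdd w.left).support ⊆ B}
      one_mem' := by
        refine ⟨rfl, ?_⟩
        show (Multiplicative.toAdd (1 : Multiplicative (ℤ →₀ ℤ))).support ⊆ B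
        simp
      mul_mem' := by
        rintro w v ⟨hw1, hw2⟩ ⟨hv1, hv2⟩
        refine ⟨?_, ?_⟩
        · show (w * v).right = 1
          rw [mul_right, hw1, hv1, mul_one]
        · show (Multiplicative.toAdd (w * v).left).support ⊆ B
          rw [mul_left, hw1, map_one]
          show (Multiplicative.toAdd (w.left * v.left)).support ⊆ B
          rw [toAdd_mul]
          exact subset_trans Finsupp.support_add (Finset.union_subset hw2 hv2)
      inv_mem' := by
        rintro w ⟨hw1, hw2⟩
        refine ⟨?_, ?_⟩
        · show (w⁻¹).right = 1
          rw [inv_right, hw1, inv_one]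
        · show (Multiplicative.toAdd (w⁻¹).left).support ⊆ B
          rw [inv_left, hw1, inv_one, map_one]
          show (Multiplicative.toAdd (w.left⁻¹)).support ⊆ B
          rw [toAdd_inv, Finsupp.support_neg]
          exact hw2 } with hL
  have hle : Subgroup.map θ (H ⊓ H') ≤ L := by
    rw [← hS]
    refine (Subgroup.closure_le _).mpr ?_
    intro w hw
    have hwmem : w ∈ Subgroup.map θ (H ⊓ H') := hS ▸ Subgroup.subset_closure hw
    obtain ⟨g, hg, rfl⟩ := hwmem
    refine ⟨hright g hg, ?_⟩
    exact Finset.le_sup (f := fun w => (Multiplicative.toAdd w.left).support) hw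
  obtain ⟨-, hsupp⟩ := hle (hmem j)
  apply hj
  apply hsupp
  show j ∈ (Multiplicative.toAdd
    ((inl (Multiplicative.ofAdd (Finsupp.single j 1)) : WG).left)).support
  rw [left_inl, toAdd_ofAdd, Finsupp.support_single_ne_zero _ one_ne_zero]
  exact Finset.mem_singleton_self j
end

section
/- Every endomorphism Ψ of G = ℤ^m × F_n with n ≠ 1 is of exactly one of the following two types: (I) Ψ(t^a u) = t^{aQ + uP} · φ(u) for some φ ∈ End(F_n), Q ∈ M_m(ℤ), P ∈ M_{n×m}(ℤ); or (II) Ψ(t^a u) = t^{aQ + uP} · z^{a·lᵀ + u·hᵀ} for some z ∈ F_n which is nontrivial and not a proper power, Q ∈ M_m(ℤ), P ∈ M_{n×m}(ℤ), 0 ≠ l ∈ ℤ^m, h ∈ ℤ^n. -/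
open Matrix

namespace Stmt11

/-- Abelianization `F_n → ℤ^n` (exponent-sum vector). -/
def abv {n : ℕ} (u : FreeGroup (Fin n)) : Fin n → ℤ :=
  Multiplicative.toAdd ((FreeGroup.lift fun i => Multiplicative.ofAdd (Pi.single i 1)) u)

abbrev GG (m n : ℕ) := Multiplicative (Fin m → ℤ) × FreeGroup (Fin n)

open FreeGroup List

variable {α : Type*} [DecidableEq α]

/-- non-cancelling adjacency -/
def NC (p q : α × Bool) : Prop := ¬ (p.1 = q.1 ∧ p.2 = !q.2)

def IsRed (L : List (α × Bool)) : Prop := List.Chain' NC L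

theorem reduce_eq_self_of_isRed {L : List (α × Bool)} (h : IsRed L) : reduce L = L := by
  induction L with
  | nil => rfl
  | cons x L ih =>
    have hL : IsRed L := (List.isChain_cons.1 h).2
    rw [reduce.cons, ih hL]
    cases L with
    | nil => rfl
    | cons y M =>
      have hxy : NC x y := (List.isChain_cons_cons.1 h).1
      simp only [if_neg hxy]

theorem isRed_reduce (L : List (α × Bool)) : IsRed (reduce L) := by
  induction L with
  | nil => exact List.isChain_nil
  | cons x L ih =>
    rw [reduce.cons]
    rcases hr : reduce L with _ | ⟨y, M⟩
    · exact List.isChain_singleton x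
    · rw [hr] at ih
      by_cases h : x.1 = y.1 ∧ x.2 = !y.2
      · simp only [if_pos h]
        exact (List.isChain_cons.1 ih).2
      · simp only [if_neg h]
        exact List.isChain_cons_cons.2 ⟨h, ih⟩

theorem isRed_toWord (x : FreeGroup α) : IsRed x.toWord := by
  rw [← reduce_toWord]; exact isRed_reduce _

theorem invRev_cons (p : α × Bool) (L : List (α × Bool)) :
    invRev (p :: L) = invRev L ++ [(p.1, !p.2)] := by
  simp [invRev]

/-- cyclically reduced words -/
def CycRed (L : List (α × Bool)) : Prop :=
  IsRed L ∧ ∀ p q, p ∈ L.head? → q ∈ L.getLast? → NC q p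

theorem cyc_decomp : ∀ (N : ℕ) (L : List (α × Bool)), L.length ≤ N → IsRed L →
    ∃ C T, L = C ++ T ++ invRev C ∧ CycRed T := by
  intro N
  induction N with
  | zero =>
    intro L hL _
    rw [Nat.le_zero, List.length_eq_zero_iff] at hL
    exact ⟨[], [], by simp [hL, invRev], List.isChain_nil, by simp [hL]⟩
  | succ N ih =>
    intro L hL hred
    by_cases hcyc : ∀ p q, p ∈ L.head? → q ∈ L.getLast? → NC q p
    · exact ⟨[], L, by simp [invRev], hred, hcyc⟩
    · push_neg at hcyc
      obtain ⟨p, q, hp, hq, hpq⟩ := hcyc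
      rcases L with _ | ⟨x, L'⟩
      · simp at hp
      have hx : x = p := by simpa using hp
      subst hx
      rcases List.eq_nil_or_concat L' with rfl | ⟨M, q', rfl⟩
      · -- singleton
        have hq2 : x = q := by simpa using hq
        subst hq2
        rw [NC, not_not] at hpq
        exact absurd hpq.2 (by simp)
      · simp only [List.concat_eq_append] at hL hred hq ⊢
        have hq' : q' = q := by
          have := hq
          simp only [List.getLast?_cons, List.getLast?_concat] at this
          · simpa [List.getLast?_append] using this
        subst hq'
        rw [NC, not_not] at hpq
        obtain ⟨h1, h2⟩ := hpq
        have hqval : q' = (x.1, !x.2) := Prod.ext h1 h2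
        -- M is reduced
        have hM : IsRed M := by
          have h1 : IsRed (M ++ [q']) := (List.isChain_cons.1 hred).2
          exact (List.isChain_append.1 h1).1
        have hlen : M.length ≤ N := by
          have := hL
          simp only [List.length_cons, List.length_append, List.length_singleton] at this
          omega
        obtain ⟨C, T, hCT, hT⟩ := ih M hlen hM
        refine ⟨x :: C, T, ?_, hT⟩
        rw [invRev_cons, hCT]
        simp [hqval]

section Pow

theorem head?_flatten_replicate {T : List (α × Bool)} (hT : T ≠ []) {k : ℕ} (hk : 1 ≤ k) :
    ((List.replicate k T).flatten).head? = T.head? := by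
  obtain ⟨k, rfl⟩ := Nat.exists_eq_add_of_le hk
  rw [add_comm, List.replicate_succ, List.flatten_cons]
  exact List.head?_append_of_ne_nil _ hT

theorem flatten_replicate_ne_nil {T : List (α × Bool)} (hT : T ≠ []) {k : ℕ} (hk : 1 ≤ k) :
    (List.replicate k T).flatten ≠ [] := by
  intro h
  have := congrArg List.head? h
  rw [head?_flatten_replicate hT hk] at this
  cases T with
  | nil => exact hT rfl
  | cons a T => simp at this

theorem getLast?_flatten_replicate {T : List (α × Bool)} (hT : T ≠ []) :
    ∀ {k : ℕ}, 1 ≤ k → ((List.replicate k T).flatten).getLast? = T.getLast? := by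
  intro k
  induction k with
  | zero => omega
  | succ k ih =>
    intro _
    rw [List.replicate_succ, List.flatten_cons]
    rcases Nat.eq_zero_or_pos k with rfl | hk
    · simp
    · rw [List.getLast?_append_of_ne_nil _ (flatten_replicate_ne_nil hT hk), ih hk]

theorem isRed_flatten_replicate {T : List (α × Bool)} (hT : CycRed T) :
    ∀ k, IsRed ((List.replicate k T).flatten) := by
  intro k
  induction k with
  | zero => exact List.isChain_nil
  | succ k ih =>
    rw [List.replicate_succ, List.flatten_cons]
    refine List.isChain_append.2 ⟨hT.1, ih, ?_⟩
    intro q hq p hp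
    rcases Nat.eq_zero_or_pos k with rfl | hk
    · simp at hp
    · rcases T with _ | ⟨t, T'⟩
      · simp at hq
      rw [head?_flatten_replicate (by simp) hk] at hp
      exact hT.2 p q hp hq

/-- The key norm computation: for `x ≠ 1` there are `c, t` with `t ≥ 1`,
`norm x = 2c + t` and `norm (x^k) = 2c + k*t` for `k ≥ 1`. -/
theorem norm_pow_formula {x : FreeGroup α} (hx : x ≠ 1) :
    ∃ c t : ℕ, 1 ≤ t ∧ norm x = 2 * c + t ∧ ∀ k : ℕ, 1 ≤ k → norm (x ^ k) = 2 * c + k * t := by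
  obtain ⟨C, T, hCT, hT⟩ := cyc_decomp (x.toWord.length) x.toWord le_rfl (isRed_toWord x)
  have hxmk : x = mk C * mk T * (mk C)⁻¹ := by
    conv_lhs => rw [← mk_toWord (x := x), hCT]
    rw [← mul_mk, ← mul_mk, inv_mk]
  have hTne : T ≠ [] := by
    rintro rfl
    apply hx
    rw [hxmk, ← one_eq_mk]
    group
  -- reducedness pieces
  have hred : IsRed (C ++ (T ++ invRev C)) := by
    have := isRed_toWord x
    rw [hCT, List.append_assoc] at this
    exact this
  obtain ⟨hC, hTI, junCT⟩ := List.isChain_append.1 hred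
  obtain ⟨-, hIC, junTI⟩ := List.isChain_append.1 hTI
  refine ⟨C.length, T.length, by rcases T with _|_ <;> simp_all, ?_, ?_⟩
  · rw [show x.norm = x.toWord.length from rfl, hCT]
    simp [invRev_length]; ring
  · intro k hk
    have hword : (x ^ k).toWord = C ++ ((List.replicate k T).flatten ++ invRev C) := by
      have hmk : x ^ k = mk (C ++ ((List.replicate k T).flatten ++ invRev C)) := by
        rw [hxmk, conj_pow, ← mul_mk, ← mul_mk, ← pow_mk, ← inv_mk, mul_assoc]
      rw [hmk, toWord_mk]
      apply reduce_eq_self_of_isRed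
      refine List.isChain_append.2 ⟨hC, List.isChain_append.2
        ⟨isRed_flatten_replicate hT k, hIC, ?_⟩, ?_⟩
      · intro q hq p hp
        rw [getLast?_flatten_replicate hTne hk] at hq
        exact junTI q hq p hp
      · intro q hq p hp
        apply junCT q hq
        rcases T with _ | ⟨t, T'⟩
        · exact absurd rfl hTne
        rw [List.head?_append_of_ne_nil _ (flatten_replicate_ne_nil hTne hk),
          head?_flatten_replicate hTne hk] at hp
        rw [List.head?_append_of_ne_nil _ (by simp)]
        exact hp
    rw [show (x^k).norm = (x^k).toWord.length from rfl, hword]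
    simp [invRev_length, List.length_flatten]
    ring
end Pow

section GroupLayer

theorem fg_pow_ne_one {x : FreeGroup α} (hx : x ≠ 1) {k : ℕ} (hk : 1 ≤ k) : x ^ k ≠ 1 := by
  obtain ⟨c, t, ht, -, hf⟩ := norm_pow_formula hx
  intro h
  have h2 := hf k hk
  rw [h, FreeGroup.norm_one] at h2
  have := Nat.mul_le_mul hk ht
  omega

theorem fg_zpow_ne_one {x : FreeGroup α} (hx : x ≠ 1) {j : ℤ} (hj : j ≠ 0) : x ^ j ≠ 1 := by
  rcases lt_or_gt_of_ne hj with h | h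
  · intro he
    have h1 : x ^ ((-j).toNat) = 1 := by
      have : x ^ (-j) = 1 := by rw [_root_.zpow_neg, he, inv_one]
      rwa [← _root_.zpow_natCast, Int.toNat_of_nonneg (by omega)]
    exact fg_pow_ne_one hx (k := (-j).toNat) (by omega) h1
  · intro he
    have h1 : x ^ (j.toNat) = 1 := by
      rwa [← _root_.zpow_natCast, Int.toNat_of_nonneg (by omega)]
    exact fg_pow_ne_one hx (k := j.toNat) (by omega) h1

theorem fg_zpow_injective {x : FreeGroup α} (hx : x ≠ 1) {a b : ℤ} (h : x ^ a = x ^ b) :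
    a = b := by
  by_contra hne
  have h1 : x ^ (a - b) = 1 := by
    rw [_root_.zpow_sub, h, mul_inv_cancel]
  exact fg_zpow_ne_one hx (sub_ne_zero.2 hne) h1

theorem fg_natAbs_le_norm_zpow {x : FreeGroup α} (hx : x ≠ 1) {j : ℤ} (hj : j ≠ 0) :
    j.natAbs ≤ norm (x ^ j) := by
  obtain ⟨c, t, ht, -, hf⟩ := norm_pow_formula hx
  have key : ∀ k : ℕ, 1 ≤ k → k ≤ norm (x ^ k) := by
    intro k hk
    rw [hf k hk]
    have := Nat.mul_le_mul (le_refl k) ht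
    omega
  rcases lt_or_gt_of_ne hj with h | h
  · have h1 : norm (x ^ j) = norm (x ^ ((-j).toNat)) := by
      rw [← norm_inv_eq, ← _root_.zpow_neg, ← _root_.zpow_natCast, Int.toNat_of_nonneg (by omega)]
    rw [h1]
    have := key ((-j).toNat) (by omega)
    omega
  · have h1 : norm (x ^ j) = norm (x ^ (j.toNat)) := by
      rw [← _root_.zpow_natCast, Int.toNat_of_nonneg (by omega)]
    rw [h1]
    have := key (j.toNat) (by omega)
    omega

end GroupLayer

section Centralizer

variable {β : Type*}

theorem fg_subsingleton_zpowers [Subsingleton β] :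
    ∃ z : FreeGroup β, ∀ v : FreeGroup β, ∃ j : ℤ, v = z ^ j := by
  rcases isEmpty_or_nonempty β with h | h
  · refine ⟨1, fun v => ⟨0, ?_⟩⟩
    have : ∀ v : FreeGroup β, v = 1 := fun v =>
      FreeGroup.induction_on v rfl (fun x => h.elim x) (fun x _ => h.elim x)
        (fun a b ha hb => by rw [ha, hb, mul_one])
    rw [this v]; simp
  · obtain ⟨b⟩ := h
    refine ⟨FreeGroup.of b, fun v => ?_⟩
    refine FreeGroup.induction_on (C := fun v => ∃ j : ℤ, v = FreeGroup.of b ^ j) v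
      ⟨0, by simp⟩ (fun x => ⟨1, by rw [Subsingleton.elim b x]; simp⟩) ?_ ?_
    · rintro x ⟨j, hj⟩
      exact ⟨-j, by rw [hj, _root_.zpow_neg]⟩
    · rintro u v ⟨j1, h1⟩ ⟨j2, h2⟩
      exact ⟨j1 + j2, by rw [h1, h2, _root_.zpow_add]⟩

theorem fg_of_mul_comm {a b : β} 
    (h : FreeGroup.of a * FreeGroup.of b = FreeGroup.of b * FreeGroup.of a) : a = b := by
  letI := Classical.decEq β
  have key : ∀ x y : β, (FreeGroup.of x * FreeGroup.of y).toWord = [(x, true), (y, true)] := by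
    intro x y
    have h1 : FreeGroup.of x * FreeGroup.of y = mk ([(x, true)] ++ [(y, true)]) := by
      rw [← mul_mk]; rfl
    rw [h1, toWord_mk]
    apply reduce_eq_self_of_isRed
    refine List.isChain_cons_cons.2 ⟨?_, List.isChain_singleton _⟩
    simp [NC]
  have := h
  apply_fun FreeGroup.toWord at this
  rw [key a b, key b a] at this
  obtain ⟨h1, -⟩ : a = b ∧ b = a := by simpa using this
  exact h1

theorem commute_of_mem_closure_pair {G : Type*} [Group G] {x y : G} (hxy : Commute x y) :
    ∀ a ∈ Subgroup.closure ({x, y} : Set G), ∀ b ∈ Subgroup.closure ({x, y} : Set G),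
      Commute a b := by
  intro a ha b hb
  refine Subgroup.closure_induction₂ (fun u v hu hv => ?_) (fun v _ => Commute.one_left v)
    (fun v _ => Commute.one_right v)
    (fun u v s _ _ _ h1 h2 => h1.mul_left h2)
    (fun u v s _ _ _ h1 h2 => h1.mul_right h2)
    (fun u v _ _ h1 => h1.inv_left)
    (fun u v _ _ h1 => h1.inv_right) ha hb
  rcases hu with rfl | hu <;> rcases hv with rfl | hv
  · exact Commute.refl _
  · rw [Set.mem_singleton_iff] at hv; subst hv; exact hxy
  · rw [Set.mem_singleton_iff] at hu; subst hu; exact hxy.symm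
  · rw [Set.mem_singleton_iff] at hu hv; subst hu; subst hv; exact Commute.refl _

theorem fg_common_root {x y : FreeGroup β} (h : Commute x y) :
    ∃ (z : FreeGroup β) (p q : ℤ), x = z ^ p ∧ y = z ^ q := by
  set H := Subgroup.closure ({x, y} : Set (FreeGroup β)) with hH
  have hcomm : ∀ a b : H, a * b = b * a := by
    rintro ⟨a, ha⟩ ⟨b, hb⟩
    apply Subtype.ext
    exact commute_of_mem_closure_pair h a ha b hb
  set e := IsFreeGroup.toFreeGroup H with he
  have hsub : Subsingleton (IsFreeGroup.Generators ↥H) := by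
    by_contra hns
    rw [not_subsingleton_iff_nontrivial] at hns
    obtain ⟨g1, g2, hg⟩ := hns.exists_pair_ne
    apply hg
    apply fg_of_mul_comm
    have h2 := hcomm (e.symm (FreeGroup.of g1)) (e.symm (FreeGroup.of g2))
    have h3 := congrArg e h2
    simpa [map_mul] using h3
  obtain ⟨z0, hz0⟩ := fg_subsingleton_zpowers (β := IsFreeGroup.Generators ↥H)
  have hxH : x ∈ H := Subgroup.subset_closure (by simp)
  have hyH : y ∈ H := Subgroup.subset_closure (by simp)
  obtain ⟨p, hp⟩ := hz0 (e ⟨x, hxH⟩)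
  obtain ⟨q, hq⟩ := hz0 (e ⟨y, hyH⟩)
  refine ⟨(e.symm z0 : H), p, q, ?_, ?_⟩
  · have h4 : (⟨x, hxH⟩ : H) = (e.symm z0) ^ p := by
      have := congrArg e.symm hp
      simpa [map_zpow] using this
    simpa using congrArg (Subtype.val) h4
  · have h4 : (⟨y, hyH⟩ : H) = (e.symm z0) ^ q := by
      have := congrArg e.symm hq
      simpa [map_zpow] using this
    simpa using congrArg (Subtype.val) h4

end Centralizer

section Centralizer2

variable {β : Type*}

theorem fg_commute_of_power {c : FreeGroup β} {a : β} (h : Commute c (FreeGroup.of a)) :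
    ∃ j : ℤ, c = FreeGroup.of a ^ j := by
  by_cases hc : c = 1
  · exact ⟨0, by simp [hc]⟩
  obtain ⟨z, p, q, hp, hq⟩ := fg_common_root h
  have hz : z ≠ 1 := by rintro rfl; simp at hp; exact hc hp
  have hq0 : q ≠ 0 := by
    rintro rfl
    rw [_root_.zpow_zero] at hq
    exact FreeGroup.of_ne_one a hq
  letI := Classical.decEq β
  have h1 : q.natAbs ≤ FreeGroup.norm (z ^ q) := fg_natAbs_le_norm_zpow hz hq0
  rw [← hq, FreeGroup.norm_of] at h1
  have : q = 1 ∨ q = -1 := by omega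
  rcases this with rfl | rfl
  · rw [_root_.zpow_one] at hq
    exact ⟨p, by rw [hp, hq]⟩
  · have hz2 : z = (FreeGroup.of a)⁻¹ := by rw [hq]; simp
    exact ⟨-p, by rw [hp, hz2, _root_.inv_zpow, ← _root_.zpow_neg]⟩

theorem fg_center_trivial {c : FreeGroup β} (hcen : ∀ x, Commute c x) {a b : β}
    (hab : a ≠ b) : c = 1 := by
  obtain ⟨p, hp⟩ := fg_commute_of_power (a := a) (hcen _)
  obtain ⟨q, hq⟩ := fg_commute_of_power (a := b) (hcen _)
  letI := Classical.decEq β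
  set μ := FreeGroup.lift (fun x : β => if x = a then Multiplicative.ofAdd (1 : ℤ) else 1) with hμ
  have h1 : μ c = Multiplicative.ofAdd p := by
    rw [hp, map_zpow, hμ, FreeGroup.lift_apply_of, if_pos rfl]
    rw [← ofAdd_zsmul]; norm_num
  have h2 : μ c = 1 := by
    rw [hq, map_zpow, hμ, FreeGroup.lift_apply_of, if_neg hab.symm, _root_.one_zpow]
  have : p = 0 := by
    have := h1.symm.trans h2
    simpa using this
  rw [hp, this, _root_.zpow_zero]

theorem fg_centralizer_cyclic {w : FreeGroup β} (hw : w ≠ 1) :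
    ∃ z : FreeGroup β, ∀ x, Commute x w → ∃ j : ℤ, x = z ^ j := by
  set H := Subgroup.centralizer ({w} : Set (FreeGroup β)) with hH
  set e := IsFreeGroup.toFreeGroup ↥H with he
  have hwH : w ∈ H := by rw [Subgroup.mem_centralizer_singleton_iff]
  set wH : H := ⟨w, hwH⟩ with hwH2
  have hcen : ∀ v : FreeGroup (IsFreeGroup.Generators ↥H), Commute (e wH) v := by
    intro v
    have hv : wH * (e.symm v) = (e.symm v) * wH := by
      apply Subtype.ext
      have h2 : (↑(e.symm v) : FreeGroup β) ∈ H := (e.symm v).2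
      rw [Subgroup.mem_centralizer_singleton_iff] at h2
      simpa using h2.symm
    have h3 := congrArg e hv
    rw [_root_.map_mul, _root_.map_mul, MulEquiv.apply_symm_apply] at h3
    exact h3
  have hsub : Subsingleton (IsFreeGroup.Generators ↥H) := by
    by_contra hns
    rw [not_subsingleton_iff_nontrivial] at hns
    obtain ⟨g1, g2, hg⟩ := hns.exists_pair_ne
    have h4 : e wH = 1 := fg_center_trivial hcen hg
    apply hw
    have h5 : wH = 1 := by
      have := congrArg e.symm h4
      simpa using this
    simpa [hwH2] using congrArg Subtype.val h5
  obtain ⟨z0, hz0⟩ := fg_subsingleton_zpowers (β := IsFreeGroup.Generators ↥H)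
  refine ⟨(e.symm z0 : H), fun x hx => ?_⟩
  have hxH : x ∈ H := by
    rw [Subgroup.mem_centralizer_singleton_iff]
    exact hx
  obtain ⟨j, hj⟩ := hz0 (e ⟨x, hxH⟩)
  refine ⟨j, ?_⟩
  have h4 : (⟨x, hxH⟩ : H) = (e.symm z0) ^ j := by
    have := congrArg e.symm hj
    simpa [map_zpow] using this
  simpa using congrArg Subtype.val h4

/-- Main free-group input: for `w ≠ 1` there is `z`, not a proper power, whose
powers contain the centralizer of `w`. -/
theorem fg_exists_root {w : FreeGroup β} (hw : w ≠ 1) :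
    ∃ z : FreeGroup β, z ≠ 1 ∧ (∀ (v : FreeGroup β) (k : ℕ), 2 ≤ k → v ^ k ≠ z) ∧
      ∀ x, Commute x w → ∃ j : ℤ, x = z ^ j := by
  letI := Classical.decEq β
  obtain ⟨z, hz⟩ := fg_centralizer_cyclic hw
  obtain ⟨j0, hj0⟩ := hz w (Commute.refl w)
  have hzne : z ≠ 1 := by rintro rfl; apply hw; simpa using hj0
  refine ⟨z, hzne, ?_, hz⟩
  intro v k hk heq
  have hv : v ≠ 1 := by rintro rfl; rw [_root_.one_pow] at heq; exact hzne heq.symm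
  have hcomm : Commute v w := by
    rw [hj0, ← heq]
    exact Commute.zpow_right ((Commute.refl v).pow_right k) j0
  obtain ⟨d, hd⟩ := hz v hcomm
  have h5 : z ^ (d * (k : ℤ)) = z ^ (1 : ℤ) := by
    rw [_root_.zpow_mul, ← hd, _root_.zpow_one, _root_.zpow_natCast, heq]
  have h6 : d * (k : ℤ) = 1 := fg_zpow_injective hzne h5
  have h7 : (k : ℤ) ∣ 1 := ⟨d, by rw [mul_comm]; exact h6.symm⟩
  have := Int.le_of_dvd one_pos h7
  omega

end Centralizer2

section Homs

variable {m n k : ℕ}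

/-- Any additive-style hom out of `ℤ^k` into `ℤ^m` is given by a matrix. -/
theorem pi_hom_eq (f : Multiplicative (Fin k → ℤ) →* Multiplicative (Fin m → ℤ))
    (a : Fin k → ℤ) :
    f (Multiplicative.ofAdd a) = Multiplicative.ofAdd
      (a ᵥ* fun i => Multiplicative.toAdd (f (Multiplicative.ofAdd (Pi.single i 1)))) := by
  set g : (Fin k → ℤ) →+ (Fin m → ℤ) := AddMonoidHom.mk'
    (fun b => Multiplicative.toAdd (f (Multiplicative.ofAdd b))) (by
      intro b c
      rw [ofAdd_add, _root_.map_mul, toAdd_mul]) with hg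
  have key : g a = a ᵥ* fun i => g (Pi.single i 1) := by
    calc g a = g (∑ i, Pi.single i (a i)) := by rw [Finset.univ_sum_single]
    _ = ∑ i, g (Pi.single i (a i)) := map_sum g _ _
    _ = ∑ i, a i • g (Pi.single i (1:ℤ)) := by
        refine Finset.sum_congr rfl fun i _ => ?_
        rw [← map_zsmul, ← Pi.single_smul, smul_eq_mul, mul_one]
    _ = a ᵥ* fun i => g (Pi.single i 1) := by
        funext j
        simp [Matrix.vecMul, dotProduct]
  calc f (Multiplicative.ofAdd a) = Multiplicative.ofAdd (g a) := rfl
  _ = _ := by rw [key]; rfl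

/-- Any additive-style hom out of `ℤ^k` into `ℤ` is given by a vector. -/
theorem int_hom_eq (f : Multiplicative (Fin k → ℤ) →* Multiplicative ℤ)
    (a : Fin k → ℤ) :
    f (Multiplicative.ofAdd a) = Multiplicative.ofAdd
      (a ⬝ᵥ fun i => Multiplicative.toAdd (f (Multiplicative.ofAdd (Pi.single i 1)))) := by
  set g : (Fin k → ℤ) →+ ℤ := AddMonoidHom.mk'
    (fun b => Multiplicative.toAdd (f (Multiplicative.ofAdd b))) (by
      intro b c
      rw [ofAdd_add, _root_.map_mul, toAdd_mul]) with hg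
  have key : g a = a ⬝ᵥ fun i => g (Pi.single i 1) := by
    calc g a = g (∑ i, Pi.single i (a i)) := by rw [Finset.univ_sum_single]
    _ = ∑ i, g (Pi.single i (a i)) := map_sum g _ _
    _ = ∑ i, a i • g (Pi.single i (1:ℤ)) := by
        refine Finset.sum_congr rfl fun i _ => ?_
        rw [← map_zsmul, ← Pi.single_smul, smul_eq_mul, mul_one]
    _ = a ⬝ᵥ fun i => g (Pi.single i 1) := by
        simp [dotProduct]
  calc f (Multiplicative.ofAdd a) = Multiplicative.ofAdd (g a) := rfl
  _ = _ := by rw [key]; rfl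

/-- The hom `u ↦ ofAdd (abv u)`. -/
def abvHom (n : ℕ) : FreeGroup (Fin n) →* Multiplicative (Fin n → ℤ) :=
  FreeGroup.lift fun i => Multiplicative.ofAdd (Pi.single i 1)

theorem abv_eq_toAdd_abvHom (u : FreeGroup (Fin n)) :
    abv u = Multiplicative.toAdd (abvHom n u) := rfl

theorem abv_one : abv (1 : FreeGroup (Fin n)) = 0 := by
  rw [abv_eq_toAdd_abvHom, _root_.map_one]; rfl

theorem abv_of (e : Fin n) : abv (FreeGroup.of e) = Pi.single e 1 := by
  rw [abv_eq_toAdd_abvHom]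
  show Multiplicative.toAdd (FreeGroup.lift _ (FreeGroup.of e)) = _
  rw [FreeGroup.lift_apply_of]
  rfl

/-- A hom from a free group to `ℤ^m` factors through the abelianization. -/
theorem free_hom_pi (ψ : FreeGroup (Fin n) →* Multiplicative (Fin m → ℤ))
    (u : FreeGroup (Fin n)) :
    ψ u = Multiplicative.ofAdd
      (abv u ᵥ* fun e => Multiplicative.toAdd (ψ (FreeGroup.of e))) := by
  set P : Matrix (Fin n) (Fin m) ℤ := fun e => Multiplicative.toAdd (ψ (FreeGroup.of e)) with hP
  set θ : Multiplicative (Fin n → ℤ) →* Multiplicative (Fin m → ℤ) := MonoidHom.mk'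
    (fun v => Multiplicative.ofAdd (Multiplicative.toAdd v ᵥ* P)) (by
      intro v v'
      rw [toAdd_mul, Matrix.add_vecMul, ofAdd_add]) with hθ
  have : ψ = θ.comp (abvHom n) := by
    apply FreeGroup.ext_hom
    intro e
    rw [MonoidHom.comp_apply]
    show ψ (FreeGroup.of e) = θ (FreeGroup.lift _ (FreeGroup.of e))
    rw [FreeGroup.lift_apply_of]
    show ψ (FreeGroup.of e) =
      Multiplicative.ofAdd (Multiplicative.toAdd (Multiplicative.ofAdd (Pi.single e (1:ℤ))) ᵥ* P)
    rw [toAdd_ofAdd, Matrix.single_one_vecMul]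
    rfl
  rw [this]
  rfl

/-- A hom from a free group to `ℤ` factors through the abelianization. -/
theorem free_hom_int (ψ : FreeGroup (Fin n) →* Multiplicative ℤ)
    (u : FreeGroup (Fin n)) :
    ψ u = Multiplicative.ofAdd
      (abv u ⬝ᵥ fun e => Multiplicative.toAdd (ψ (FreeGroup.of e))) := by
  set h : Fin n → ℤ := fun e => Multiplicative.toAdd (ψ (FreeGroup.of e)) with hh
  set θ : Multiplicative (Fin n → ℤ) →* Multiplicative ℤ := MonoidHom.mk'
    (fun v => Multiplicative.ofAdd (Multiplicative.toAdd v ⬝ᵥ h)) (by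
      intro v v'
      rw [toAdd_mul, add_dotProduct, ofAdd_add]) with hθ
  have : ψ = θ.comp (abvHom n) := by
    apply FreeGroup.ext_hom
    intro e
    rw [MonoidHom.comp_apply]
    show ψ (FreeGroup.of e) = θ (FreeGroup.lift _ (FreeGroup.of e))
    rw [FreeGroup.lift_apply_of]
    show ψ (FreeGroup.of e) =
      Multiplicative.ofAdd (Multiplicative.toAdd (Multiplicative.ofAdd (Pi.single e (1:ℤ))) ⬝ᵥ h)
    rw [toAdd_ofAdd, single_one_dotProduct]
    rfl
  rw [this]
  rfl

/-- Factorization of a hom `GG m n →* ℤ^m`. -/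
theorem gg_hom_pi (χ : GG m n →* Multiplicative (Fin m → ℤ)) :
    ∃ (Q : Matrix (Fin m) (Fin m) ℤ) (P : Matrix (Fin n) (Fin m) ℤ),
      ∀ (a : Fin m → ℤ) (u : FreeGroup (Fin n)),
        χ (Multiplicative.ofAdd a, u) = Multiplicative.ofAdd (a ᵥ* Q + abv u ᵥ* P) := by
  refine ⟨fun i => Multiplicative.toAdd
      ((χ.comp (MonoidHom.inl (Multiplicative (Fin m → ℤ)) (FreeGroup (Fin n))))
        (Multiplicative.ofAdd (Pi.single i 1))),
    fun e => Multiplicative.toAdd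
      ((χ.comp (MonoidHom.inr (Multiplicative (Fin m → ℤ)) (FreeGroup (Fin n))))
        (FreeGroup.of e)), fun a u => ?_⟩
  have hsplit : (Multiplicative.ofAdd a, u) =
      ((Multiplicative.ofAdd a, 1) : GG m n) * ((1 : Multiplicative (Fin m → ℤ)), u) := by
    rw [Prod.mk_mul_mk, mul_one, one_mul]
  rw [hsplit, _root_.map_mul,
    show χ ((Multiplicative.ofAdd a, 1) : GG m n)
      = (χ.comp (MonoidHom.inl (Multiplicative (Fin m → ℤ)) (FreeGroup (Fin n))))
          (Multiplicative.ofAdd a) from rfl,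
    show χ (((1 : Multiplicative (Fin m → ℤ)), u) : GG m n)
      = (χ.comp (MonoidHom.inr (Multiplicative (Fin m → ℤ)) (FreeGroup (Fin n)))) u from rfl,
    pi_hom_eq, free_hom_pi, ← ofAdd_add]

/-- Factorization of a hom `GG m n →* ℤ`. -/
theorem gg_hom_int (χ : GG m n →* Multiplicative ℤ) :
    ∃ (l : Fin m → ℤ) (h : Fin n → ℤ),
      ∀ (a : Fin m → ℤ) (u : FreeGroup (Fin n)),
        χ (Multiplicative.ofAdd a, u) = Multiplicative.ofAdd (a ⬝ᵥ l + abv u ⬝ᵥ h) := by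
  refine ⟨fun i => Multiplicative.toAdd
      ((χ.comp (MonoidHom.inl (Multiplicative (Fin m → ℤ)) (FreeGroup (Fin n))))
        (Multiplicative.ofAdd (Pi.single i 1))),
    fun e => Multiplicative.toAdd
      ((χ.comp (MonoidHom.inr (Multiplicative (Fin m → ℤ)) (FreeGroup (Fin n))))
        (FreeGroup.of e)), fun a u => ?_⟩
  have hsplit : (Multiplicative.ofAdd a, u) =
      ((Multiplicative.ofAdd a, 1) : GG m n) * ((1 : Multiplicative (Fin m → ℤ)), u) := by
    rw [Prod.mk_mul_mk, mul_one, one_mul]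
  rw [hsplit, _root_.map_mul,
    show χ ((Multiplicative.ofAdd a, 1) : GG m n)
      = (χ.comp (MonoidHom.inl (Multiplicative (Fin m → ℤ)) (FreeGroup (Fin n))))
          (Multiplicative.ofAdd a) from rfl,
    show χ (((1 : Multiplicative (Fin m → ℤ)), u) : GG m n)
      = (χ.comp (MonoidHom.inr (Multiplicative (Fin m → ℤ)) (FreeGroup (Fin n)))) u from rfl,
    int_hom_eq, free_hom_int, ← ofAdd_add]

end Homs

/-- Type (I): `t^a u ↦ t^{aQ+ūP} φ(u)`. -/
def IsTypeI (m n : ℕ) (Ψ : GG m n →* GG m n) : Prop :=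
  ∃ (φ : FreeGroup (Fin n) →* FreeGroup (Fin n)) (Q : Matrix (Fin m) (Fin m) ℤ)
    (P : Matrix (Fin n) (Fin m) ℤ),
    ∀ (a : Fin m → ℤ) (u : FreeGroup (Fin n)),
      Ψ (Multiplicative.ofAdd a, u) =
        (Multiplicative.ofAdd (a ᵥ* Q + abv u ᵥ* P), φ u)

/-- Type (II): `t^a u ↦ t^{aQ+ūP} z^{a·lᵀ+ū·hᵀ}` with `z ≠ 1` not a proper power, `l ≠ 0`. -/
def IsTypeII (m n : ℕ) (Ψ : GG m n →* GG m n) : Prop :=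
  ∃ (z : FreeGroup (Fin n)) (Q : Matrix (Fin m) (Fin m) ℤ) (P : Matrix (Fin n) (Fin m) ℤ)
    (l : Fin m → ℤ) (h : Fin n → ℤ),
    z ≠ 1 ∧ (∀ (w : FreeGroup (Fin n)) (k : ℕ), 2 ≤ k → w ^ k ≠ z) ∧ l ≠ 0 ∧
      ∀ (a : Fin m → ℤ) (u : FreeGroup (Fin n)),
        Ψ (Multiplicative.ofAdd a, u) =
          (Multiplicative.ofAdd (a ᵥ* Q + abv u ᵥ* P), z ^ (a ⬝ᵥ l + abv u ⬝ᵥ h))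

/-- for `n ≠ 1`, every endomorphism of `ℤ^m × F_n` is of exactly one of
the two types. -/
theorem stmt11 (m n : ℕ) (hn : n ≠ 1) (Ψ : GG m n →* GG m n) :
    Xor' (IsTypeI m n Ψ) (IsTypeII m n Ψ) := by
  classical
  set s : GG m n →* FreeGroup (Fin n) :=
    (MonoidHom.snd (Multiplicative (Fin m → ℤ)) (FreeGroup (Fin n))).comp Ψ with hs
  set χ : GG m n →* Multiplicative (Fin m → ℤ) :=
    (MonoidHom.fst (Multiplicative (Fin m → ℤ)) (FreeGroup (Fin n))).comp Ψ with hχ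
  have hΨ : ∀ g : GG m n, Ψ g = (χ g, s g) := fun g => rfl
  obtain ⟨Q, P, hQP⟩ := gg_hom_pi χ
  by_cases hcase : ∀ a : Fin m → ℤ, s (Multiplicative.ofAdd a, 1) = 1
  · left
    constructor
    · refine ⟨s.comp (MonoidHom.inr (Multiplicative (Fin m → ℤ)) (FreeGroup (Fin n))), Q, P,
        fun a u => ?_⟩
      rw [hΨ, hQP]
      refine Prod.ext rfl ?_
      show s (Multiplicative.ofAdd a, u) = s (1, u)
      have hspl : ((Multiplicative.ofAdd a, u) : GG m n) =
          (Multiplicative.ofAdd a, 1) * (1, u) := by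
        rw [Prod.mk_mul_mk, mul_one, one_mul]
      rw [hspl, _root_.map_mul, hcase a, one_mul]
    · rintro ⟨z, Q', P', l, h, hz1, hnp, hl, hII⟩
      obtain ⟨i, hi⟩ := Function.ne_iff.1 hl
      have h1 : s (Multiplicative.ofAdd (Pi.single i 1), (1 : FreeGroup (Fin n)))
          = z ^ (Pi.single i 1 ⬝ᵥ l + abv (1 : FreeGroup (Fin n)) ⬝ᵥ h) :=
        congrArg Prod.snd (hII (Pi.single i 1) 1)
      rw [hcase, abv_one, single_one_dotProduct, zero_dotProduct, add_zero] at h1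
      exact fg_zpow_ne_one hz1 hi h1.symm
  · push_neg at hcase
    obtain ⟨a₀, hw⟩ := hcase
    have hcomm : ∀ g : GG m n, Commute (s g) (s (Multiplicative.ofAdd a₀, 1)) := by
      intro g
      have hgc : Commute g ((Multiplicative.ofAdd a₀, 1) : GG m n) := by
        refine Prod.ext (mul_comm _ _) ?_
        show g.2 * 1 = 1 * g.2
        rw [mul_one, one_mul]
      exact hgc.map s
    obtain ⟨z, hz1, hnp, hzpow⟩ := fg_exists_root hw
    choose κ hκ using fun g : GG m n => hzpow (s g) (hcomm g)
    have hκmul : ∀ g g' : GG m n, κ (g * g') = κ g + κ g' := by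
      intro g g'
      apply fg_zpow_injective hz1
      rw [← hκ (g * g'), _root_.map_mul, hκ g, hκ g', _root_.zpow_add]
    obtain ⟨l, h, hE⟩ := gg_hom_int (MonoidHom.mk' (fun g : GG m n => Multiplicative.ofAdd (κ g))
      (fun g g' => by rw [hκmul, ofAdd_add]))
    have hEval : ∀ (a : Fin m → ℤ) (u : FreeGroup (Fin n)),
        κ (Multiplicative.ofAdd a, u) = a ⬝ᵥ l + abv u ⬝ᵥ h := by
      intro a u
      exact Multiplicative.ofAdd.injective (hE a u)
    right
    constructor
    · refine ⟨z, Q, P, l, h, hz1, hnp, ?_, fun a u => ?_⟩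
      · rintro rfl
        apply hw
        rw [hκ (Multiplicative.ofAdd a₀, 1), hEval, abv_one, dotProduct_zero,
          zero_dotProduct, add_zero, _root_.zpow_zero]
      · rw [hΨ, hQP]
        refine Prod.ext rfl ?_
        show s (Multiplicative.ofAdd a, u) = _
        rw [hκ (Multiplicative.ofAdd a, u), hEval]
    · rintro ⟨φ, Q', P', hI⟩
      apply hw
      have h1 : s (Multiplicative.ofAdd a₀, (1 : FreeGroup (Fin n))) = φ 1 :=
        congrArg Prod.snd (hI a₀ 1)
      rw [_root_.map_one] at h1
      exact h1

end Stmt11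
end

section
/- Let n ≥ 2 and let Ψ = Ψ_{φ,Q,P} be a type (I) endomorphism of ℤ^m × F_n given by (a, u) ↦ (aQ + ūP, φ(u)). Then Ψ is injective if and only if φ is injective and det(Q) ≠ 0. -/
open Matrix

namespace Stmt13

def abv {n : ℕ} (u : FreeGroup (Fin n)) : Fin n → ℤ :=
  Multiplicative.toAdd ((FreeGroup.lift fun i => Multiplicative.ofAdd (Pi.single i 1)) u)

abbrev GG (m n : ℕ) := Multiplicative (Fin m → ℤ) × FreeGroup (Fin n)

/-! ### Auxiliary lemmas -/

lemma abv_of {n : ℕ} (i : Fin n) : abv (FreeGroup.of i) = Pi.single i 1 := by simp [abv]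

lemma abv_one {n : ℕ} : abv (1 : FreeGroup (Fin n)) = 0 := by simp [abv]

lemma abv_mul {n : ℕ} (u v : FreeGroup (Fin n)) : abv (u * v) = abv u + abv v := by simp [abv]

lemma abv_inv {n : ℕ} (u : FreeGroup (Fin n)) : abv u⁻¹ = - abv u := by simp [abv]

lemma abv_zpow {n : ℕ} (u : FreeGroup (Fin n)) (k : ℤ) : abv (u ^ k) = k • abv u := by
  simp [abv]

/-- A free group on a subsingleton type is cyclic. -/
lemma freeGroup_cyclic {ι : Type} [Subsingleton ι] :
    ∃ t : FreeGroup ι, ∀ w : FreeGroup ι, w ∈ Subgroup.zpowers t := by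
  by_cases h : Nonempty ι
  · obtain ⟨i⟩ := h
    refine ⟨FreeGroup.of i, fun w => ?_⟩
    induction w with
    | C1 => exact one_mem _
    | of x => rw [Subsingleton.elim x i]; exact Subgroup.mem_zpowers _
    | inv_of x _ => exact inv_mem (by rw [Subsingleton.elim x i]; exact Subgroup.mem_zpowers _)
    | mul x y hx hy => exact mul_mem hx hy
  · refine ⟨1, fun w => ?_⟩
    induction w with
    | C1 => exact one_mem _
    | of x => exact absurd ⟨x⟩ h
    | inv_of x _ => exact absurd ⟨x⟩ h
    | mul x y hx hy => exact mul_mem hx hy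

lemma not_commute_tf : ¬ Commute (FreeGroup.of true) (FreeGroup.of false) :=
  fun h => (by decide : FreeGroup.of true * FreeGroup.of false ≠
    FreeGroup.of false * FreeGroup.of true) h.eq

/-- Two commuting elements of a free group are powers of a common element. -/
lemma commute_common_root {n : ℕ} (a b : FreeGroup (Fin n)) (h : Commute a b) :
    ∃ t : FreeGroup (Fin n), a ∈ Subgroup.zpowers t ∧ b ∈ Subgroup.zpowers t := by
  set H : Subgroup (FreeGroup (Fin n)) := Subgroup.closure {a, b} with hH
  have hcomm : ∀ x y : H, Commute x y := by
    rintro ⟨x, hx⟩ ⟨y, hy⟩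
    have : Commute x y := by
      induction hx, hy using Subgroup.closure_induction₂ with
      | mem x y hx hy =>
        rcases hx with rfl | rfl <;> rcases hy with rfl | rfl
        · rfl
        · exact h
        · exact h.symm
        · rfl
      | one_left x hx => exact Commute.one_left x
      | one_right x hx => exact Commute.one_right x
      | mul_left x y z _ _ _ h1 h2 => exact h1.mul_left h2
      | mul_right y z x _ _ _ h1 h2 => exact h1.mul_right h2
      | inv_left x y _ _ h1 => exact h1.inv_left
      | inv_right x y _ _ h1 => exact h1.inv_right
    exact Subtype.ext (by simpa using this.eq)
  haveI : IsFreeGroup H := inferInstance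
  haveI : Subsingleton (IsFreeGroup.Generators H) := by
    refine ⟨fun i j => ?_⟩
    by_contra hij
    classical
    let f : H →* FreeGroup Bool :=
      IsFreeGroup.lift (fun x => if x = i then FreeGroup.of true else FreeGroup.of false)
    have hc : Commute (IsFreeGroup.of (G := H) i) (IsFreeGroup.of (G := H) j) := hcomm _ _
    have := hc.map f
    rw [IsFreeGroup.lift_of, IsFreeGroup.lift_of, if_pos rfl, if_neg (Ne.symm hij)] at this
    exact not_commute_tf this
  obtain ⟨t0, ht0⟩ := freeGroup_cyclic (ι := IsFreeGroup.Generators H)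
  have hcyc : ∀ g : H, g ∈ Subgroup.zpowers ((IsFreeGroup.mulEquiv H) t0) := by
    intro g
    obtain ⟨k, hk⟩ := ht0 ((IsFreeGroup.mulEquiv H).symm g)
    exact ⟨k, by simpa using congrArg (IsFreeGroup.mulEquiv H) hk⟩
  have ha : a ∈ H := Subgroup.subset_closure (by simp)
  have hb : b ∈ H := Subgroup.subset_closure (by simp)
  refine ⟨((IsFreeGroup.mulEquiv H) t0 : H), ?_, ?_⟩
  · obtain ⟨k, hk⟩ := hcyc ⟨a, ha⟩
    exact ⟨k, by simpa using congrArg (Subtype.val) hk⟩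
  · obtain ⟨k, hk⟩ := hcyc ⟨b, hb⟩
    exact ⟨k, by simpa using congrArg (Subtype.val) hk⟩

/-- If `of i` is a power of `t` and `u` is a power of `t`, then `u` is a power of `of i`. -/
lemma mem_zpowers_of_gen {n : ℕ} (i : Fin n) (t u : FreeGroup (Fin n))
    (hu : u ∈ Subgroup.zpowers t) (ht : FreeGroup.of i ∈ Subgroup.zpowers t) :
    u ∈ Subgroup.zpowers (FreeGroup.of i) := by
  obtain ⟨j, hj⟩ := ht
  have habv := congrArg abv hj
  rw [abv_zpow, abv_of] at habv
  have h1 : j * abv t i = 1 := by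
    have := congrFun habv i
    simpa [Pi.single_eq_same] using this
  have hj1 : j = 1 ∨ j = -1 := Int.eq_one_or_neg_one_of_mul_eq_one h1
  obtain ⟨k, hk⟩ := hu
  simp only at hk hj
  rcases hj1 with rfl | rfl
  · rw [zpow_one] at hj
    exact ⟨k, by simp only; rw [← hj, hk]⟩
  · have ht' : t = (FreeGroup.of i)⁻¹ := by
      rw [← hj]; group
    exact ⟨-k, by simp only; rw [ht'] at hk; rw [← hk]; group⟩

/-- For `n ≥ 2`, a central element of the free group `F_n` is trivial. -/
lemma central_eq_one {n : ℕ} (hn : 2 ≤ n) (u : FreeGroup (Fin n))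
    (h : ∀ x : FreeGroup (Fin n), Commute u x) : u = 1 := by
  set i0 : Fin n := ⟨0, by omega⟩
  set i1 : Fin n := ⟨1, by omega⟩
  have hne : i0 ≠ i1 := by simp [i0, i1, Fin.ext_iff]
  obtain ⟨t, hu0, h0⟩ := commute_common_root u (FreeGroup.of i0) (h _)
  obtain ⟨s, hu1, h1⟩ := commute_common_root u (FreeGroup.of i1) (h _)
  obtain ⟨p, hp⟩ := mem_zpowers_of_gen i0 t u hu0 h0
  obtain ⟨q, hq⟩ := mem_zpowers_of_gen i1 s u hu1 h1
  simp only at hp hq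
  have habv : p • abv (FreeGroup.of i0) = q • abv (FreeGroup.of i1) := by
    rw [← abv_zpow, ← abv_zpow, hp, hq]
  rw [abv_of, abv_of] at habv
  have hp0 : p = 0 := by
    have := congrFun habv i0
    simpa [Pi.single_eq_same, Pi.single_eq_of_ne hne] using this
  rw [← hp, hp0, zpow_zero]

/-! ### Main theorem -/

/-- for `n ≥ 2`, a type (I) endomorphism `Ψ_{φ,Q,P}` of `ℤ^m × F_n` is
injective iff `φ` is injective and `det Q ≠ 0`. -/
theorem stmt13 (m n : ℕ) (hn : 2 ≤ n) (φ : FreeGroup (Fin n) →* FreeGroup (Fin n))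
    (Q : Matrix (Fin m) (Fin m) ℤ) (P : Matrix (Fin n) (Fin m) ℤ)
    (Ψ : GG m n →* GG m n)
    (hΨ : ∀ (a : Fin m → ℤ) (u : FreeGroup (Fin n)),
      Ψ (Multiplicative.ofAdd a, u) =
        (Multiplicative.ofAdd (a ᵥ* Q + abv u ᵥ* P), φ u)) :
    Function.Injective Ψ ↔ Function.Injective φ ∧ Q.det ≠ 0 := by
  constructor
  · intro hinj
    constructor
    · -- φ is injective
      rw [injective_iff_map_eq_one φ]
      intro u hu
      -- u commutes with every x
      have hcomm : ∀ x : FreeGroup (Fin n), Commute u x := by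
        intro x
        have hc : φ (u⁻¹ * (x * u * x⁻¹)) = 1 := by
          rw [_root_.map_mul, _root_.map_mul, _root_.map_mul, map_inv, map_inv, hu]
          group
        have habv : abv (u⁻¹ * (x * u * x⁻¹)) = 0 := by
          simp only [abv_mul, abv_inv]
          abel
        have h1 : Ψ (Multiplicative.ofAdd 0, u⁻¹ * (x * u * x⁻¹)) =
            Ψ (Multiplicative.ofAdd 0, 1) := by
          rw [hΨ, hΨ, habv, abv_one, hc, _root_.map_one]
        have h2 := hinj h1
        have h3 : u⁻¹ * (x * u * x⁻¹) = 1 := congrArg Prod.snd h2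
        have h4 : u = x * u * x⁻¹ := inv_mul_eq_one.mp h3
        show u * x = x * u
        calc u * x = (x * u * x⁻¹) * x := by rw [← h4]
        _ = x * u := by group
      exact central_eq_one hn u hcomm
    · -- det Q ≠ 0
      intro hdet
      obtain ⟨a, ha, haQ⟩ := Matrix.exists_vecMul_eq_zero_iff.mpr hdet
      have h1 : Ψ (Multiplicative.ofAdd a, 1) = Ψ (Multiplicative.ofAdd 0, 1) := by
        rw [hΨ, hΨ, haQ, abv_one]
        simp
      have := hinj h1
      have : Multiplicative.ofAdd a = Multiplicative.ofAdd (0 : Fin m → ℤ) :=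
        congrArg Prod.fst this
      exact ha (by simpa using this)
  · rintro ⟨hφ, hdet⟩
    intro x y hxy
    obtain ⟨a, u⟩ := x
    obtain ⟨b, v⟩ := y
    have hax : (Multiplicative.ofAdd (Multiplicative.toAdd a), u) = (a, u) := rfl
    have hbx : (Multiplicative.ofAdd (Multiplicative.toAdd b), v) = (b, v) := rfl
    rw [← hax, ← hbx, hΨ, hΨ] at hxy
    have huv : u = v := hφ (congrArg Prod.snd hxy)
    have h1 : Multiplicative.toAdd a ᵥ* Q + abv u ᵥ* P =
        Multiplicative.toAdd b ᵥ* Q + abv v ᵥ* P := by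
      have := congrArg Prod.fst hxy
      exact Multiplicative.ofAdd.injective this
    rw [huv] at h1
    have h2 : Multiplicative.toAdd a ᵥ* Q = Multiplicative.toAdd b ᵥ* Q := by
      exact add_right_cancel h1
    have h3 : (Multiplicative.toAdd a - Multiplicative.toAdd b) ᵥ* Q = 0 := by
      rw [Matrix.sub_vecMul, h2, sub_self]
    have h4 := Matrix.eq_zero_of_vecMul_eq_zero hdet h3
    have h5 : Multiplicative.toAdd a = Multiplicative.toAdd b := by
      have := sub_eq_zero.mp h4
      exact this
    rw [huv]
    exact Prod.ext (by simpa using congrArg Multiplicative.ofAdd h5) rfl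

end Stmt13
end

section
/- Let n ≥ 2 and let Ψ = Ψ_{φ,Q,P} be a type (I) endomorphism of ℤ^m × F_n given by (a, u) ↦ (aQ + ūP, φ(u)). Then Ψ is surjective if and only if φ is surjective and det(Q) = ±1. -/
open Matrix

namespace Stmt14

def abv {n : ℕ} (u : FreeGroup (Fin n)) : Fin n → ℤ :=
  Multiplicative.toAdd ((FreeGroup.lift fun i => Multiplicative.ofAdd (Pi.single i 1)) u)

abbrev GG (m n : ℕ) := Multiplicative (Fin m → ℤ) × FreeGroup (Fin n)

lemma toAdd_list_prod {G : Type*} [AddMonoid G] (l : List (Multiplicative G)) :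
    Multiplicative.toAdd l.prod = (l.map Multiplicative.toAdd).sum := by
  induction l with
  | nil => simp
  | cons a l ih => simp [ih]

lemma abv_lift {n k : ℕ} (c : Fin n → (Fin k → ℤ)) (u : FreeGroup (Fin n)) :
    Multiplicative.toAdd ((FreeGroup.lift fun i => Multiplicative.ofAdd (c i)) u)
      = abv u ᵥ* Matrix.of c := by
  have h : (FreeGroup.lift fun i => Multiplicative.ofAdd (c i)) =
      (AddMonoidHom.toMultiplicative (Matrix.of c).vecMulLinear.toAddMonoidHom).comp
        (FreeGroup.lift fun i => Multiplicative.ofAdd (Pi.single i 1)) := by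
    apply FreeGroup.ext_hom
    intro a
    simp [Matrix.single_one_vecMul]
  rw [h]
  rfl

lemma abv_surjective {n : ℕ} : Function.Surjective (abv (n := n)) := by
  intro x
  refine ⟨((List.finRange n).map (fun i => FreeGroup.of i ^ (x i))).prod, ?_⟩
  unfold abv
  rw [map_list_prod, toAdd_list_prod]
  have : ∀ i : Fin n, Multiplicative.toAdd
      ((FreeGroup.lift fun i => Multiplicative.ofAdd (Pi.single i (1:ℤ)))
        (FreeGroup.of i ^ (x i))) = Pi.single i (x i) := by
    intro i
    rw [map_zpow, FreeGroup.lift_apply_of, toAdd_zpow, toAdd_ofAdd]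
    funext j
    by_cases h : j = i <;> simp [Pi.single_apply, h]
  simp only [List.map_map, Function.comp_def, this]
  rw [← Fin.sum_univ_def, Finset.univ_sum_single]

/-- for `n ≥ 2`, a type (I) endomorphism `Ψ_{φ,Q,P}` of `ℤ^m × F_n` is
surjective iff `φ` is surjective and `det Q = ±1`. -/
theorem stmt14 (m n : ℕ) (hn : 2 ≤ n) (φ : FreeGroup (Fin n) →* FreeGroup (Fin n))
    (Q : Matrix (Fin m) (Fin m) ℤ) (P : Matrix (Fin n) (Fin m) ℤ)
    (Ψ : GG m n →* GG m n)
    (hΨ : ∀ (a : Fin m → ℤ) (u : FreeGroup (Fin n)),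
      Ψ (Multiplicative.ofAdd a, u) =
        (Multiplicative.ofAdd (a ᵥ* Q + abv u ᵥ* P), φ u)) :
    Function.Surjective Ψ ↔ Function.Surjective φ ∧ (Q.det = 1 ∨ Q.det = -1) := by
  set M : Matrix (Fin n) (Fin n) ℤ := Matrix.of fun i => abv (φ (FreeGroup.of i)) with hM
  have habvφ : ∀ u, abv (φ u) = abv u ᵥ* M := by
    intro u
    have h : (FreeGroup.lift fun i => Multiplicative.ofAdd (Pi.single i 1)).comp φ
        = FreeGroup.lift fun i => Multiplicative.ofAdd (abv (φ (FreeGroup.of i))) := by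
      apply FreeGroup.ext_hom; intro a
      simp [abv]
    have h2 := abv_lift (fun i => abv (φ (FreeGroup.of i))) u
    calc abv (φ u) = Multiplicative.toAdd
          (((FreeGroup.lift fun i => Multiplicative.ofAdd (Pi.single i 1)).comp φ) u) := rfl
      _ = abv u ᵥ* M := by rw [h]; exact h2
  constructor
  · intro hsurj
    have hφsurj : Function.Surjective φ := by
      intro v
      obtain ⟨p, hp⟩ := hsurj (1, v)
      refine ⟨p.2, ?_⟩
      have hp' := hΨ (Multiplicative.toAdd p.1) p.2
      rw [show (Multiplicative.ofAdd (Multiplicative.toAdd p.1), p.2) = p from rfl, hp] at hp'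
      exact (congrArg Prod.snd hp').symm
    refine ⟨hφsurj, ?_⟩
    set B : Matrix (Fin m ⊕ Fin n) (Fin m ⊕ Fin n) ℤ := Matrix.fromBlocks Q 0 P M with hB
    have hBsurj : Function.Surjective B.vecMulLinear := by
      intro y
      obtain ⟨v, hv⟩ := abv_surjective (fun j => y (Sum.inr j))
      obtain ⟨p, hp⟩ := hsurj (Multiplicative.ofAdd (fun i => y (Sum.inl i)), v)
      have hp' := hΨ (Multiplicative.toAdd p.1) p.2
      rw [show (Multiplicative.ofAdd (Multiplicative.toAdd p.1), p.2) = p from rfl, hp] at hp'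
      have h1 : Multiplicative.toAdd p.1 ᵥ* Q + abv p.2 ᵥ* P = fun i => y (Sum.inl i) := by
        have := congrArg (fun z => Multiplicative.toAdd z.1) hp'
        simpa using this.symm
      have h2 : φ p.2 = v := (congrArg Prod.snd hp').symm
      refine ⟨Sum.elim (Multiplicative.toAdd p.1) (abv p.2), ?_⟩
      rw [Matrix.vecMulLinear_apply, hB, Matrix.vecMul_fromBlocks]
      funext i
      cases i with
      | inl i =>
        simpa using congrFun h1 i
      | inr j =>
        have : abv p.2 ᵥ* M = fun j => y (Sum.inr j) := by
          rw [← habvφ, h2, hv]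
        simpa using congrFun this j
    have hBinj : Function.Injective B.vecMulLinear :=
      OrzechProperty.injective_of_surjective_endomorphism _ hBsurj
    have hdet : IsUnit (LinearMap.det B.vecMulLinear) := by
      have := (LinearEquiv.ofBijective B.vecMulLinear ⟨hBinj, hBsurj⟩).isUnit_det'
      exact this
    rw [show B.vecMulLinear = Matrix.mulVecLin Bᵀ by
        rw [← Matrix.vecMulLinear_transpose, Matrix.transpose_transpose],
      ← Matrix.toLin'_apply', LinearMap.det_toLin',
      Matrix.det_transpose, hB, Matrix.det_fromBlocks_zero₁₂] at hdet
    have : IsUnit Q.det := isUnit_of_mul_isUnit_left hdet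
    exact Int.isUnit_iff.mp this
  · rintro ⟨hφ, hdetQ⟩
    have hQ : IsUnit Q.det := by
      rcases hdetQ with h | h <;> rw [h]
      · exact isUnit_one
      · exact isUnit_one.neg
    rintro ⟨y, v⟩
    obtain ⟨u, hu⟩ := hφ v
    refine ⟨(Multiplicative.ofAdd ((Multiplicative.toAdd y - abv u ᵥ* P) ᵥ* Q⁻¹), u), ?_⟩
    rw [hΨ]
    have key : ((Multiplicative.toAdd y - abv u ᵥ* P) ᵥ* Q⁻¹) ᵥ* Q + abv u ᵥ* P
        = Multiplicative.toAdd y := by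
      rw [Matrix.vecMul_vecMul, Matrix.nonsing_inv_mul _ hQ, Matrix.vecMul_one,
        sub_add_cancel]
    rw [key, hu]
    rfl

end Stmt14
end

section
/- Let n ≠ 1 and let Ψ = Ψ_{z,l,h,Q,P} be a type (II) endomorphism of ℤ^m × F_n, given by (a, u) ↦ (aQ + ūP, z^{a·lᵀ + ū·hᵀ}), where 1 ≠ z ∈ F_n is not a proper power, l ≠ 0. Then the fixed subgroup Fix(Ψ) is finitely generated; indeed Fix(Ψ) = { t^a z^r : a·lᵀ + r(z̄·hᵀ) = r and a(I_m − Q) = r z̄ P }, an abelian group embedding in ℤ^{m+1}. -/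
open Matrix

namespace Stmt18

def abv {n : ℕ} (u : FreeGroup (Fin n)) : Fin n → ℤ :=
  Multiplicative.toAdd ((FreeGroup.lift fun i => Multiplicative.ofAdd (Pi.single i 1)) u)

abbrev GG (m n : ℕ) := Multiplicative (Fin m → ℤ) × FreeGroup (Fin n)

lemma abv_mul {n : ℕ} (u v : FreeGroup (Fin n)) : abv (u * v) = abv u + abv v := by
  simp [abv, _root_.map_mul, toAdd_mul]

lemma abv_zpow {n : ℕ} (u : FreeGroup (Fin n)) (r : ℤ) : abv (u ^ r) = r • abv u := by
  simp [abv, _root_.map_zpow, toAdd_zpow]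

lemma subgroup_fg {k : ℕ} (P : Subgroup (Multiplicative (Fin k → ℤ))) : P.FG := by
  rw [Subgroup.fg_iff_add_fg]
  set X := Additive (Multiplicative (Fin k → ℤ))
  let e : X ≃+ (Fin k → ℤ) :=
    { toFun := fun a => Multiplicative.toAdd (Additive.toMul a)
      invFun := fun a => Additive.ofMul (Multiplicative.ofAdd a)
      left_inv := fun _ => rfl
      right_inv := fun _ => rfl
      map_add' := fun _ _ => rfl }
  have hN : IsNoetherian ℤ X :=
    isNoetherian_of_linearEquiv (e.toIntLinearEquiv.symm)
  have := hN.noetherian (AddSubgroup.toIntSubmodule P.toAddSubgroup)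
  rwa [Submodule.fg_iff_addSubgroup_fg, AddSubgroup.toIntSubmodule_toAddSubgroup] at this

/-- for `n ≠ 1` and a type (II) endomorphism
`Ψ(a,u) = (aQ + ūP, z^{a·lᵀ + ū·hᵀ})` (`z ≠ 1` not a proper power, `l ≠ 0`), the fixed
subgroup is finitely generated; it equals
`{ t^a z^r : a·lᵀ + r(z̄·hᵀ) = r, a(I_m − Q) = r z̄ P }`, an abelian group embedding
into `ℤ^{m+1}`. -/
theorem stmt18 (m n : ℕ) (hn : n ≠ 1) (z : FreeGroup (Fin n))
    (Q : Matrix (Fin m) (Fin m) ℤ) (P : Matrix (Fin n) (Fin m) ℤ)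
    (l : Fin m → ℤ) (h : Fin n → ℤ)
    (hz : z ≠ 1) (hzp : ∀ (w : FreeGroup (Fin n)) (k : ℕ), 2 ≤ k → w ^ k ≠ z)
    (hl : l ≠ 0)
    (Ψ : GG m n →* GG m n)
    (hΨ : ∀ (a : Fin m → ℤ) (u : FreeGroup (Fin n)),
      Ψ (Multiplicative.ofAdd a, u) =
        (Multiplicative.ofAdd (a ᵥ* Q + abv u ᵥ* P), z ^ (a ⬝ᵥ l + abv u ⬝ᵥ h))) :
    ∃ S : Subgroup (GG m n),
      (∀ g, g ∈ S ↔ Ψ g = g) ∧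
      S.FG ∧
      (∀ g, g ∈ S ↔ ∃ (a : Fin m → ℤ) (r : ℤ),
        g = (Multiplicative.ofAdd a, z ^ r) ∧
        a ⬝ᵥ l + r * (abv z ⬝ᵥ h) = r ∧
        a ᵥ* (1 - Q) = r • (abv z ᵥ* P)) ∧
      (∀ x y : GG m n, x ∈ S → y ∈ S → x * y = y * x) ∧
      ∃ f : S →* Multiplicative (Fin (m + 1) → ℤ), Function.Injective f := by
  classical
  -- key characterization of fixed points
  have key : ∀ g : GG m n, Ψ g = g ↔ ∃ (a : Fin m → ℤ) (r : ℤ),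
      g = (Multiplicative.ofAdd a, z ^ r) ∧
      a ⬝ᵥ l + r * (abv z ⬝ᵥ h) = r ∧
      a ᵥ* (1 - Q) = r • (abv z ᵥ* P) := by
    rintro ⟨a, u⟩
    constructor
    · intro hfix
      rw [show ((a, u) : GG m n) = (Multiplicative.ofAdd a.toAdd, u) from rfl,
        hΨ a.toAdd u] at hfix
      have h1 : a.toAdd ᵥ* Q + abv u ᵥ* P = a.toAdd :=
        congrArg (fun p : GG m n => Multiplicative.toAdd p.1) hfix
      have h2 : z ^ (a.toAdd ⬝ᵥ l + abv u ⬝ᵥ h) = u := congrArg Prod.snd hfix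
      obtain ⟨s, hs⟩ : ∃ s : ℤ, u = z ^ s := ⟨_, h2.symm⟩
      subst hs
      rw [abv_zpow, smul_dotProduct, smul_eq_mul] at h2
      rw [abv_zpow, Matrix.smul_vecMul] at h1
      by_cases hzb : abv z = 0
      · refine ⟨a.toAdd, a.toAdd ⬝ᵥ l, ?_, ?_, ?_⟩
        · have : a.toAdd ⬝ᵥ l + s * (abv z ⬝ᵥ h) = a.toAdd ⬝ᵥ l := by
            rw [hzb, zero_dotProduct, mul_zero, add_zero]
          rw [this] at h2
          exact Prod.ext rfl h2.symm
        · rw [hzb, zero_dotProduct, mul_zero, add_zero]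
        · rw [hzb, Matrix.zero_vecMul, smul_zero, Matrix.vecMul_sub, Matrix.vecMul_one]
          rw [hzb, Matrix.zero_vecMul, smul_zero, add_zero] at h1
          rw [h1, sub_self]
      · have hcs : a.toAdd ⬝ᵥ l + s * (abv z ⬝ᵥ h) = s := by
          have habv2 := congrArg abv h2
          rw [abv_zpow, abv_zpow] at habv2
          have : (a.toAdd ⬝ᵥ l + s * (abv z ⬝ᵥ h)) - s = 0 := by
            by_contra hne
            apply hzb
            have := sub_smul (a.toAdd ⬝ᵥ l + s * (abv z ⬝ᵥ h)) s (abv z)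
            rw [habv2, sub_self] at this
            rcases smul_eq_zero.1 this with hc | hc
            · exact absurd hc hne
            · exact hc
          linarith
        refine ⟨a.toAdd, s, rfl, hcs, ?_⟩
        rw [Matrix.vecMul_sub, Matrix.vecMul_one]
        funext i
        have h1i := congrFun h1 i
        simp only [Pi.add_apply, Pi.sub_apply, Pi.smul_apply, smul_eq_mul] at h1i ⊢
        linarith
    · rintro ⟨b, r, heq, hc1, hc2⟩
      rw [heq, hΨ b (z ^ r)]
      have e2 : b ⬝ᵥ l + abv ((z : FreeGroup (Fin n)) ^ r) ⬝ᵥ h = r := by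
        rw [abv_zpow, smul_dotProduct, smul_eq_mul]; exact hc1
      have e1 : b ᵥ* Q + abv ((z : FreeGroup (Fin n)) ^ r) ᵥ* P = b := by
        rw [abv_zpow, Matrix.smul_vecMul]
        rw [Matrix.vecMul_sub, Matrix.vecMul_one] at hc2
        funext i
        have hc2i := congrFun hc2 i
        simp only [Pi.add_apply, Pi.sub_apply, Pi.smul_apply, smul_eq_mul] at hc2i ⊢
        linarith
      rw [e1, e2]
  -- the global homomorphism recording (exponent, abelian part)
  let ρ : GG m n → ℤ := fun g => g.1.toAdd ⬝ᵥ l + abv g.2 ⬝ᵥ h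
  let F : GG m n →* Multiplicative (Fin (m + 1) → ℤ) :=
    MonoidHom.mk' (fun g => Multiplicative.ofAdd (Fin.cons (ρ g) g.1.toAdd)) (by
      intro x y
      apply congrArg Multiplicative.ofAdd
      funext i
      refine Fin.cases ?_ (fun j => ?_) i
      · show ρ (x * y) = ρ x + ρ y
        simp only [ρ, Prod.fst_mul, Prod.snd_mul, toAdd_mul, abv_mul,
          add_dotProduct]
        ring
      · show (x.1 * y.1).toAdd j = x.1.toAdd j + y.1.toAdd j
        rfl)
  -- on fixed points, ρ recovers the exponent
  have hρ : ∀ (b : Fin m → ℤ) (r : ℤ),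
      b ⬝ᵥ l + r * (abv z ⬝ᵥ h) = r →
      ρ (Multiplicative.ofAdd b, z ^ r) = r := by
    intro b r hc1
    show b ⬝ᵥ l + abv ((z : FreeGroup (Fin n)) ^ r) ⬝ᵥ h = r
    rw [abv_zpow, smul_dotProduct, smul_eq_mul]; exact hc1
  -- injectivity of F on fixed points
  have hinj : ∀ x y : GG m n, Ψ x = x → Ψ y = y → F x = F y → x = y := by
    intro x y hx hy hF
    have hFadd : (Fin.cons (ρ x) x.1.toAdd : Fin (m + 1) → ℤ)
        = Fin.cons (ρ y) y.1.toAdd := congrArg Multiplicative.toAdd hF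
    have hhead : ρ x = ρ y := by simpa using congrFun hFadd 0
    have htail : x.1.toAdd = y.1.toAdd := by
      funext j; simpa using congrFun hFadd j.succ
    obtain ⟨a1, r1, heq1, hc1, -⟩ := (key x).1 hx
    obtain ⟨a2, r2, heq2, hc2, -⟩ := (key y).1 hy
    have hr1 : ρ x = r1 := by rw [heq1]; exact hρ a1 r1 hc1
    have hr2 : ρ y = r2 := by rw [heq2]; exact hρ a2 r2 hc2
    have hfst : x.1 = y.1 := by
      have := htail; exact Multiplicative.toAdd.injective this
    have hsnd : x.2 = y.2 := by
      have hx2 : x.2 = z ^ r1 := congrArg Prod.snd heq1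
      have hy2 : y.2 = z ^ r2 := congrArg Prod.snd heq2
      rw [hx2, hy2, ← hr1, ← hr2, hhead]
    exact Prod.ext hfst hsnd
  refine ⟨Ψ.eqLocus (MonoidHom.id _), fun g => Iff.rfl, ?_, key, ?_, ?_⟩
  · -- finitely generated
    set S := Ψ.eqLocus (MonoidHom.id (GG m n)) with hS
    let f : S →* Multiplicative (Fin (m + 1) → ℤ) := F.comp S.subtype
    have hfi : Function.Injective f := by
      intro x y hxy
      exact Subtype.ext (hinj x.1 y.1 x.2 y.2 hxy)
    haveI : Group.FG f.range := (Group.fg_iff_subgroup_fg _).2 (subgroup_fg _)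
    haveI : Group.FG S := by
      have e := MonoidHom.ofInjective hfi
      exact Group.fg_of_surjective (f := e.symm.toMonoidHom) e.symm.surjective
    exact (Group.fg_iff_subgroup_fg _).1 ‹Group.FG S›
  · -- abelian
    intro x y hx hy
    obtain ⟨a1, r1, rfl, -, -⟩ := (key x).1 hx
    obtain ⟨a2, r2, rfl, -, -⟩ := (key y).1 hy
    have : (z : FreeGroup (Fin n)) ^ r1 * z ^ r2 = z ^ r2 * z ^ r1 := by
      rw [← _root_.zpow_add, ← _root_.zpow_add, add_comm]
    exact Prod.ext (mul_comm _ _) this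
  · -- embedding
    exact ⟨F.comp (Ψ.eqLocus (MonoidHom.id _)).subtype,
      fun x y hxy => Subtype.ext (hinj x.1 y.1 x.2 y.2 hxy)⟩


end Stmt18
end
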